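/- arXiv:2002.11096 — 2 statements merged into one kernel-verified Lean document; each statement's English description precedes it below -/
import Mathlib

section
/- Without using observational data: let (Y_i, T_i, Z_i), i = 1,...,m, be i.i.d. samples from the joint distribution of three binary variables (Y, T, Z) with parameters p_1,...,p_8, and let each empirical frequency p̂_j be the fraction of the m samples equal to the j-th outcome, and let ATE-hat := ATE(p̂_1,...,p̂_8) be the plug-in estimator. Suppose 0 < ε ≤ 1, 0 < δ < 1, and p_3+p_7 > 0, p_4+p_8 > 0, p_1+p_5 > 0, p_2+p_6 > 0. If m ≥ (18 ln(16/δ)/ε²) · max( 1/(p_3+p_7)², 1/(p_4+p_8)², 1/(p_1+p_5)², 1/(p_2+p_6)² ), then P(|ATE-hat − ATE(p_1,...,p_8)| ≥ ε) < δ. -/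
open MeasureTheory ProbabilityTheory

/-- The average treatment effect as a function of the joint distribution
`p : Fin 8 → ℝ`, where `p 0 = P(Y=0,T=0,Z=0)`, `p 1 = P(Y=0,T=0,Z=1)`,
`p 2 = P(Y=0,T=1,Z=0)`, `p 3 = P(Y=0,T=1,Z=1)`, `p 4 = P(Y=1,T=0,Z=0)`,
`p 5 = P(Y=1,T=0,Z=1)`, `p 6 = P(Y=1,T=1,Z=0)`, `p 7 = P(Y=1,T=1,Z=1)`
(i.e. `p i` here is `p_{i+1}` in the paper). -/
noncomputable def ATE (p : Fin 8 → ℝ) : ℝ :=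
  p 6 * (p 0 + p 2 + p 4 + p 6) / (p 6 + p 2)
    + p 7 * (1 - p 0 - p 2 - p 4 - p 6) / (p 7 + p 3)
    - p 4 * (p 0 + p 2 + p 4 + p 6) / (p 4 + p 0)
    - p 5 * (1 - p 0 - p 2 - p 4 - p 6) / (p 5 + p 1)


open Real
lemma bern_pos (r : ℝ) (hr0 : 0 ≤ r) (hr1 : r ≤ 1) (x : ℝ) :
    0 < 1 - r + r * Real.exp x := by
  nlinarith [Real.exp_pos x, mul_nonneg hr0 (Real.exp_pos x).le,
    mul_nonneg (sub_nonneg.2 hr1) (Real.exp_pos x).le]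

/-- Hoeffding's lemma for Bernoulli-type mgf. -/
lemma bernoulli_mgf_le (r : ℝ) (hr0 : 0 ≤ r) (hr1 : r ≤ 1) (t : ℝ) :
    1 - r + r * Real.exp t ≤ Real.exp (t * r + t ^ 2 / 8) := by
  set h : ℝ → ℝ := fun x => 1 - r + r * Real.exp x with hh_def
  have hpos : ∀ x, 0 < h x := bern_pos r hr0 hr1
  have hh : ∀ x, HasDerivAt h (r * Real.exp x) x := fun x =>
    ((Real.hasDerivAt_exp x).const_mul r).const_add (1 - r)
  set G : ℝ → ℝ := fun x => r + x / 4 - r * Real.exp x / h x with hG_def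
  have hG' : ∀ x, HasDerivAt G
      (1 / 4 - (r * Real.exp x * h x - r * Real.exp x * (r * Real.exp x)) / (h x) ^ 2) x := by
    intro x
    have h1 : HasDerivAt (fun x : ℝ => r + x / 4) (1 / 4) x := by
      simpa using ((hasDerivAt_id x).div_const 4).const_add r
    have h2 : HasDerivAt (fun x => r * Real.exp x / h x)
        ((r * Real.exp x * h x - r * Real.exp x * (r * Real.exp x)) / (h x) ^ 2) x :=
      ((Real.hasDerivAt_exp x).const_mul r).div (hh x) (hpos x).ne'
    exact h1.sub h2
  have hGmono : Monotone G := by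
    apply monotone_of_hasDerivAt_nonneg hG'
    intro x
    have hx := hpos x
    have hq : 0 ≤ r * Real.exp x := mul_nonneg hr0 (Real.exp_pos x).le
    have key : r * Real.exp x * h x - r * Real.exp x * (r * Real.exp x) ≤ (h x) ^ 2 / 4 := by
      have : h x - r * Real.exp x = 1 - r := by simp [hh_def]
      nlinarith [sq_nonneg (h x - 2 * (r * Real.exp x))]
    have : (r * Real.exp x * h x - r * Real.exp x * (r * Real.exp x)) / (h x) ^ 2 ≤ 1 / 4 := by
      rw [div_le_iff₀ (by positivity)]
      nlinarith
    simp only [Pi.zero_apply]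
    linarith
  have hG0 : G 0 = 0 := by simp [hG_def, hh_def]
  set F : ℝ → ℝ := fun x => r * x + x ^ 2 / 8 - Real.log (h x) with hF_def
  have hF' : ∀ x, HasDerivAt F (G x) x := by
    intro x
    have h1 : HasDerivAt (fun x : ℝ => r * x + x ^ 2 / 8)
        (r + x / 4) x := by
      have : HasDerivAt (fun x : ℝ => x ^ 2 / 8) (2 * x ^ 1 / 8) x :=
        (hasDerivAt_pow 2 x).div_const 8
      have h2 := ((hasDerivAt_id x).const_mul r).add this
      exact h2.congr_deriv (by ring)
    have h2 : HasDerivAt (fun x => Real.log (h x)) (r * Real.exp x / h x) x :=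
      (hh x).log (hpos x).ne'
    exact h1.sub h2
  have hF0 : F 0 = 0 := by simp [hF_def, hh_def]
  have hFt : 0 ≤ F t := by
    rcases le_total 0 t with ht | ht
    · have hmono : MonotoneOn F (Set.Ici (0:ℝ)) := by
        apply monotoneOn_of_hasDerivWithinAt_nonneg (convex_Ici 0)
          (fun x _ => (hF' x).continuousAt.continuousWithinAt)
          (fun x hx => (hF' x).hasDerivWithinAt)
        intro x hx
        rw [interior_Ici] at hx
        have := hGmono (le_of_lt hx)
        linarith [hG0 ▸ this]
      have := hmono Set.self_mem_Ici (Set.mem_Ici.2 ht) ht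
      linarith [hF0 ▸ this]
    · have hmono : AntitoneOn F (Set.Iic (0:ℝ)) := by
        apply antitoneOn_of_hasDerivWithinAt_nonpos (convex_Iic 0)
          (fun x _ => (hF' x).continuousAt.continuousWithinAt)
          (fun x hx => (hF' x).hasDerivWithinAt)
        intro x hx
        rw [interior_Iic] at hx
        have := hGmono (le_of_lt hx)
        linarith [hG0 ▸ this]
      have := hmono (Set.mem_Iic.2 ht) Set.self_mem_Iic ht
      linarith [hF0 ▸ this]
  have hlog : Real.log (h t) ≤ r * t + t ^ 2 / 8 := by
    simp only [hF_def] at hFt; linarith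
  calc h t = Real.exp (Real.log (h t)) := (Real.exp_log (hpos t)).symm
  _ ≤ Real.exp (t * r + t ^ 2 / 8) := by
      apply Real.exp_le_exp.2; rw [mul_comm t r]; exact hlog


lemma chernoff_indicator {Ω : Type*} [MeasurableSpace Ω] (μ : Measure Ω) [IsProbabilityMeasure μ]
    {n : ℕ} (A : Fin n → Set Ω) (hA : ∀ i, MeasurableSet (A i))
    (hindep : iIndepFun
      (fun i (ω : Ω) => (A i).indicator (fun _ => (1:ℝ)) ω) μ)
    (r : ℝ) (hr0 : 0 ≤ r) (hr1 : r ≤ 1)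
    (hr : ∀ i, μ (A i) = ENNReal.ofReal r)
    (τ : ℝ) (hτ : 0 < τ) :
    μ {ω | (r + τ) * n ≤ ∑ i, (A i).indicator (fun _ => (1:ℝ)) ω} ≤
      ENNReal.ofReal (Real.exp (-2 * n * τ ^ 2)) := by
  classical
  set X : Fin n → Ω → ℝ := fun i ω => (A i).indicator (fun _ => (1:ℝ)) ω with hX_def
  have hXmeas : ∀ i, Measurable (X i) := fun i =>
    measurable_const.indicator (hA i)
  have hexp_eq : ∀ (i) (t : ℝ) (ω), Real.exp (t * X i ω) = 1 + (Real.exp t - 1) * X i ω := by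
    intro i t ω
    by_cases hω : ω ∈ A i <;> simp [hX_def, Set.indicator_apply, hω]
  have hXint : ∀ i, Integrable (X i) μ := by
    intro i
    exact (integrable_const (1:ℝ)).indicator (hA i)
  have hint : ∀ (i) (t : ℝ), Integrable (fun ω => Real.exp (t * X i ω)) μ := by
    intro i t
    simp_rw [hexp_eq i t]
    exact (integrable_const (1:ℝ)).add ((hXint i).const_mul _)
  have hmgf : ∀ (i) (t : ℝ), mgf (X i) μ t = 1 + (Real.exp t - 1) * r := by
    intro i t
    rw [mgf]
    simp_rw [hexp_eq i t]
    rw [integral_add (integrable_const _) ((hXint i).const_mul _),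
      integral_const, integral_const_mul, hX_def, integral_indicator_const _ (hA i), measureReal_def μ (A i), hr i]
    simp [ENNReal.toReal_ofReal hr0]
  have hmgf_le : ∀ (i) (t : ℝ), mgf (X i) μ t ≤ Real.exp (t * r + t ^ 2 / 8) := by
    intro i t
    rw [hmgf i t]
    have := bernoulli_mgf_le r hr0 hr1 t
    nlinarith [this]
  set t : ℝ := 4 * τ with ht_def
  have ht0 : 0 ≤ t := by positivity
  have hSint : Integrable (fun ω => Real.exp (t * (∑ i, X i) ω)) μ :=
    hindep.integrable_exp_mul_sum hXmeas (fun i _ => hint i t)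
  have h1 := measure_ge_le_exp_mul_mgf (μ := μ) (X := ∑ i, X i) ((r + τ) * n) ht0 hSint
  have h2 : mgf (∑ i, X i) μ t ≤ Real.exp (t * r + t ^ 2 / 8) ^ n := by
    rw [hindep.mgf_sum hXmeas]
    calc ∏ i, mgf (X i) μ t ≤ ∏ _i : Fin n, Real.exp (t * r + t ^ 2 / 8) :=
          Finset.prod_le_prod (fun i _ => mgf_nonneg) (fun i _ => hmgf_le i t)
    _ = Real.exp (t * r + t ^ 2 / 8) ^ n := by simp
  have h3 : Real.exp (-t * ((r + τ) * n)) * Real.exp (t * r + t ^ 2 / 8) ^ n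
      = Real.exp (-2 * n * τ ^ 2) := by
    rw [← Real.exp_nat_mul, ← Real.exp_add]
    congr 1
    rw [ht_def]; ring
  have h4 : (μ {ω | (r + τ) * ↑n ≤ (∑ i, X i) ω}).toReal ≤ Real.exp (-2 * n * τ ^ 2) := by
    refine h1.trans ?_
    rw [← h3]
    exact mul_le_mul_of_nonneg_left h2 (Real.exp_pos _).le
  have hset : {ω | (r + τ) * (n:ℝ) ≤ ∑ i, (A i).indicator (fun _ => (1:ℝ)) ω}
      = {ω | (r + τ) * (n:ℝ) ≤ (∑ i, X i) ω} := by
    ext ω; simp [hX_def]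
  rw [hset]
  calc μ {ω | (r + τ) * (n:ℝ) ≤ (∑ i, X i) ω}
      = ENNReal.ofReal ((μ {ω | (r + τ) * (n:ℝ) ≤ (∑ i, X i) ω}).toReal) :=
        (ENNReal.ofReal_toReal (measure_ne_top μ _)).symm
  _ ≤ ENNReal.ofReal (Real.exp (-2 * n * τ ^ 2)) := ENNReal.ofReal_le_ofReal h4


lemma chernoff_indicator_lower {Ω : Type*} [MeasurableSpace Ω] (μ : Measure Ω)
    [IsProbabilityMeasure μ]
    {n : ℕ} (A : Fin n → Set Ω) (hA : ∀ i, MeasurableSet (A i))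
    (hindep : iIndepFun
      (fun i (ω : Ω) => (A i).indicator (fun _ => (1:ℝ)) ω) μ)
    (r : ℝ) (hr0 : 0 ≤ r) (hr1 : r ≤ 1)
    (hr : ∀ i, μ (A i) = ENNReal.ofReal r)
    (τ : ℝ) (hτ : 0 < τ) :
    μ {ω | ∑ i, (A i).indicator (fun _ => (1:ℝ)) ω ≤ (r - τ) * n} ≤
      ENNReal.ofReal (Real.exp (-2 * n * τ ^ 2)) := by
  have hB : ∀ i, MeasurableSet (A i)ᶜ := fun i => (hA i).compl
  have hfun : (fun i (ω : Ω) => ((A i)ᶜ).indicator (fun _ => (1:ℝ)) ω)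
      = fun i => (fun x : ℝ => 1 - x) ∘ (fun ω => (A i).indicator (fun _ => (1:ℝ)) ω) := by
    funext i ω
    by_cases h : ω ∈ A i <;> simp [h, Set.indicator_apply]
  have hindB : iIndepFun
      (fun i (ω : Ω) => ((A i)ᶜ).indicator (fun _ => (1:ℝ)) ω) μ := by
    rw [hfun]
    exact hindep.comp (fun _ => fun x : ℝ => 1 - x)
      (fun _ => measurable_const.sub measurable_id)
  have hrB : ∀ i, μ (A i)ᶜ = ENNReal.ofReal (1 - r) := by
    intro i
    rw [measure_compl (hA i) (measure_ne_top μ _), hr i, measure_univ,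
      ENNReal.ofReal_sub _ hr0, ENNReal.ofReal_one]
  have h := chernoff_indicator μ (fun i => (A i)ᶜ) hB hindB (1 - r)
    (by linarith) (by linarith) hrB τ hτ
  have hsum : ∀ ω : Ω, ∑ i, ((A i)ᶜ).indicator (fun _ => (1:ℝ)) ω
      = n - ∑ i, (A i).indicator (fun _ => (1:ℝ)) ω := by
    intro ω
    have h1 : ∀ i : Fin n, ((A i)ᶜ).indicator (fun _ => (1:ℝ)) ω
        = 1 - (A i).indicator (fun _ => (1:ℝ)) ω := by
      intro i; by_cases hh : ω ∈ A i <;> simp [hh, Set.indicator_apply]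
    rw [Finset.sum_congr rfl (fun i _ => h1 i), Finset.sum_sub_distrib]
    simp
  have hset : {ω | ∑ i, (A i).indicator (fun _ => (1:ℝ)) ω ≤ (r - τ) * n}
      = {ω | (1 - r + τ) * n ≤ ∑ i, ((A i)ᶜ).indicator (fun _ => (1:ℝ)) ω} := by
    ext ω
    simp only [Set.mem_setOf_eq, hsum ω]
    constructor <;> intro hh <;> linarith
  rw [hset]
  exact h


lemma ratio_dev (n s n' s' τ : ℝ) (hn : 0 ≤ n) (hns : n ≤ s) (hs : 0 < s)
    (hn' : 0 ≤ n') (hns' : n' ≤ s') (hτ0 : 0 < τ) (hτs : τ < s)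
    (dn : |n' - n| < τ) (ds : |s' - s| < τ) :
    |n' / s' - n / s| ≤ 2 * τ / s := by
  rw [abs_lt] at dn ds
  obtain ⟨dn1, dn2⟩ := dn
  obtain ⟨ds1, ds2⟩ := ds
  have hs'0 : 0 < s' := by linarith
  rw [abs_le]
  constructor
  · -- n/s - n'/s' ≤ 2τ/s
    rw [neg_le, neg_sub]
    by_cases hcase : n ≤ 2 * τ
    · have h1 : n / s ≤ 2 * τ / s := by gcongr
      have h2 : 0 ≤ n' / s' := div_nonneg hn' hs'0.le
      linarith
    · push_neg at hcase
      have h1 : (n - τ) / (s + τ) ≤ n' / s' := by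
        apply div_le_div₀ hn' (by linarith) hs'0 (by linarith)
      have h2 : n / s - (n - τ) / (s + τ) ≤ 2 * τ / s := by
        rw [div_sub_div _ _ hs.ne' (by positivity), div_le_div_iff₀ (by positivity) hs]
        nlinarith [mul_nonneg (mul_nonneg hτ0.le hs.le) (show (0:ℝ) ≤ s + 2*τ - n by linarith)]
      linarith
  · -- n'/s' - n/s ≤ 2τ/s
    by_cases hcase : s - n ≤ 2 * τ
    · have h1 : n' / s' ≤ 1 := (div_le_one hs'0).2 hns'
      have h2 : (s - 2 * τ) / s ≤ n / s := by gcongr; linarith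
      have h3 : (s - 2 * τ) / s = 1 - 2 * τ / s := by field_simp
      linarith
    · push_neg at hcase
      have h1 : n' / s' ≤ (n + τ) / (s - τ) := by
        apply div_le_div₀ (by linarith) (by linarith) (by linarith) (by linarith)
      have h2 : (n + τ) / (s - τ) - n / s ≤ 2 * τ / s := by
        rw [div_sub_div _ _ (show s - τ ≠ 0 by intro h; linarith [h]; ) hs.ne',
          div_le_div_iff₀ (mul_pos (show (0:ℝ) < s - τ by linarith) hs) hs]
        nlinarith [mul_nonneg (mul_nonneg hτ0.le hs.le) (show (0:ℝ) ≤ 2*(s-τ) - (n+s) by linarith)]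
      linarith

lemma ate_error_core
    (A Ah ε β : ℝ)
    (q1 q2 q3 q4 qh1 qh2 qh3 qh4 : ℝ)
    (hA0 : 0 < A) (hA1 : A < 1)
    (hβ : β = 1 / (4 + 2 * A))
    (hε0 : 0 < ε)
    (hb1 : 0 ≤ qh1) (hb1' : qh1 ≤ 1) (hb2 : 0 ≤ qh2) (hb2' : qh2 ≤ 1)
    (hb3 : 0 ≤ qh3) (hb3' : qh3 ≤ 1) (hb4 : 0 ≤ qh4) (hb4' : qh4 ≤ 1)
    (hdA : |Ah - A| < β * ε * A)
    (hd1 : |qh1 - q1| ≤ 2 * (β * ε)) (hd2 : |qh2 - q2| ≤ 2 * (β * ε))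
    (hd3 : |qh3 - q3| ≤ 2 * (β * ε)) (hd4 : |qh4 - q4| ≤ 2 * (β * ε)) :
    |(Ah * qh1 + (1 - Ah) * qh2 - Ah * qh3 - (1 - Ah) * qh4)
      - (A * q1 + (1 - A) * q2 - A * q3 - (1 - A) * q4)| < ε := by
  have hβpos : 0 < β := by rw [hβ]; positivity
  have hβA : β * (4 + 2 * A) = 1 := by rw [hβ]; field_simp
  set e := Ah - A with he
  set u := qh1 - qh3 - (qh2 - qh4) with hu_def
  set d1 := qh1 - q1 with hd1_def
  set d2 := qh2 - q2
  set d3 := qh3 - q3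
  set d4 := qh4 - q4
  have hu : |u| ≤ 2 := by
    rw [abs_le]; constructor <;> simp only [hu_def] <;> linarith
  have heu : |e * u| < 2 * (β * ε * A) := by
    rw [abs_mul]
    calc |e| * |u| ≤ |e| * 2 := by
          exact mul_le_mul_of_nonneg_left hu (abs_nonneg e)
    _ < 2 * (β * ε * A) := by linarith [hdA]
  have hident : (Ah * qh1 + (1 - Ah) * qh2 - Ah * qh3 - (1 - Ah) * qh4)
      - (A * q1 + (1 - A) * q2 - A * q3 - (1 - A) * q4)
      = e * u + (A * (d1 - d3) + (1 - A) * (d2 - d4)) := by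
    simp only [he, hu_def, hd1_def]; ring
  rw [hident]
  have h13 : |d1 - d3| ≤ 4 * (β * ε) := by
    have := abs_sub (qh1 - q1) (qh3 - q3)
    calc |d1 - d3| ≤ |d1| + |d3| := abs_sub _ _
    _ ≤ 4 * (β * ε) := by linarith
  have h24 : |d2 - d4| ≤ 4 * (β * ε) := by
    calc |d2 - d4| ≤ |d2| + |d4| := abs_sub _ _
    _ ≤ 4 * (β * ε) := by linarith
  have habs : |e * u + (A * (d1 - d3) + (1 - A) * (d2 - d4))|
      ≤ |e * u| + (A * |d1 - d3| + (1 - A) * |d2 - d4|) := by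
    calc |e * u + (A * (d1 - d3) + (1 - A) * (d2 - d4))|
        ≤ |e * u| + |A * (d1 - d3) + (1 - A) * (d2 - d4)| := abs_add_le _ _
    _ ≤ |e * u| + (|A * (d1 - d3)| + |(1 - A) * (d2 - d4)|) := by
        linarith [abs_add_le (A * (d1 - d3)) ((1 - A) * (d2 - d4))]
    _ = |e * u| + (A * |d1 - d3| + (1 - A) * |d2 - d4|) := by
        rw [abs_mul, abs_mul, abs_mul, abs_of_nonneg hA0.le, abs_of_nonneg (by linarith : (0:ℝ) ≤ 1 - A)]
  have hA4 : A * |d1 - d3| + (1 - A) * |d2 - d4| ≤ 4 * (β * ε) := by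
    nlinarith [abs_nonneg (d1 - d3), abs_nonneg (d2 - d4)]
  have : |e * u| + (A * |d1 - d3| + (1 - A) * |d2 - d4|) < ε := by
    nlinarith
  linarith [habs]

set_option maxHeartbeats 2000000 in
lemma ate_dev_lt (p q : Fin 8 → ℝ) (ε : ℝ) (hε0 : 0 < ε) (hε1 : ε ≤ 1)
    (hp : ∀ j, 0 ≤ p j) (hq : ∀ j, 0 ≤ q j)
    (hs1 : 0 < p 2 + p 6) (hs2 : 0 < p 3 + p 7) (hs3 : 0 < p 0 + p 4) (hs4 : 0 < p 1 + p 5)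
    (hsum : ∑ j, p j = 1)
    (β : ℝ) (hβ : β = 1 / (4 + 2 * (p 0 + p 2 + p 4 + p 6)))
    (d1n : |q 6 - p 6| < β * ε * (p 2 + p 6))
    (d1s : |(q 2 + q 6) - (p 2 + p 6)| < β * ε * (p 2 + p 6))
    (d2n : |q 7 - p 7| < β * ε * (p 3 + p 7))
    (d2s : |(q 3 + q 7) - (p 3 + p 7)| < β * ε * (p 3 + p 7))
    (d3n : |q 4 - p 4| < β * ε * (p 0 + p 4))
    (d3s : |(q 0 + q 4) - (p 0 + p 4)| < β * ε * (p 0 + p 4))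
    (d4n : |q 5 - p 5| < β * ε * (p 1 + p 5))
    (d4s : |(q 1 + q 5) - (p 1 + p 5)| < β * ε * (p 1 + p 5)) :
    |ATE q - ATE p| < ε := by
  have hsum' : p 0 + p 1 + p 2 + p 3 + p 4 + p 5 + p 6 + p 7 = 1 := by
    rw [← hsum]; rw [Fin.sum_univ_eight]
  set A : ℝ := p 0 + p 2 + p 4 + p 6 with hA_def
  have hA0 : 0 < A := by
    have := hp 0; have := hp 4; simp only [hA_def]; linarith
  have hA1 : A < 1 := by
    have := hp 1; have := hp 5; simp only [hA_def]; linarith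
  have hβ0 : 0 < β := by rw [hβ]; positivity
  have hβ14 : β < 1 / 4 := by
    rw [hβ]
    rw [div_lt_div_iff₀ (by linarith) (by norm_num)]
    linarith
  have hβε1 : β * ε < 1 := by nlinarith [hβ0, hβ14, hε0, hε1]
  have hβε0 : 0 < β * ε := by positivity
  -- positivity of empirical denominators
  have hq26 : 0 < q 6 + q 2 := by
    rw [abs_lt] at d1s; nlinarith [d1s.1, mul_pos (show (0:ℝ) < 1 - β * ε by linarith) hs1]
  have hq37 : 0 < q 7 + q 3 := by
    rw [abs_lt] at d2s; nlinarith [d2s.1, mul_pos (show (0:ℝ) < 1 - β * ε by linarith) hs2]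
  have hq04 : 0 < q 4 + q 0 := by
    rw [abs_lt] at d3s; nlinarith [d3s.1, mul_pos (show (0:ℝ) < 1 - β * ε by linarith) hs3]
  have hq15 : 0 < q 5 + q 1 := by
    rw [abs_lt] at d4s; nlinarith [d4s.1, mul_pos (show (0:ℝ) < 1 - β * ε by linarith) hs4]
  -- ratio deviations
  have hr1 : |q 6 / (q 6 + q 2) - p 6 / (p 6 + p 2)| ≤ 2 * (β * ε) := by
    have h := ratio_dev (p 6) (p 6 + p 2) (q 6) (q 6 + q 2) (β * ε * (p 2 + p 6))
      (hp 6) (by linarith [hp 2]) (by linarith) (hq 6) (by linarith [hq 2])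
      (by positivity) (by nlinarith [mul_pos (show (0:ℝ) < 1 - β * ε by linarith) hs1])
      d1n (by rw [show q 6 + q 2 = q 2 + q 6 by ring, show p 6 + p 2 = p 2 + p 6 by ring]; exact d1s)
    calc |q 6 / (q 6 + q 2) - p 6 / (p 6 + p 2)| ≤
        2 * (β * ε * (p 2 + p 6)) / (p 6 + p 2) := h
    _ = 2 * (β * ε) := by rw [show p 6 + p 2 = p 2 + p 6 by ring]; field_simp
  have hr2 : |q 7 / (q 7 + q 3) - p 7 / (p 7 + p 3)| ≤ 2 * (β * ε) := by
    have h := ratio_dev (p 7) (p 7 + p 3) (q 7) (q 7 + q 3) (β * ε * (p 3 + p 7))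
      (hp 7) (by linarith [hp 3]) (by linarith) (hq 7) (by linarith [hq 3])
      (by positivity) (by nlinarith [mul_pos (show (0:ℝ) < 1 - β * ε by linarith) hs2])
      d2n (by rw [show q 7 + q 3 = q 3 + q 7 by ring, show p 7 + p 3 = p 3 + p 7 by ring]; exact d2s)
    calc |q 7 / (q 7 + q 3) - p 7 / (p 7 + p 3)| ≤
        2 * (β * ε * (p 3 + p 7)) / (p 7 + p 3) := h
    _ = 2 * (β * ε) := by rw [show p 7 + p 3 = p 3 + p 7 by ring]; field_simp
  have hr3 : |q 4 / (q 4 + q 0) - p 4 / (p 4 + p 0)| ≤ 2 * (β * ε) := by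
    have h := ratio_dev (p 4) (p 4 + p 0) (q 4) (q 4 + q 0) (β * ε * (p 0 + p 4))
      (hp 4) (by linarith [hp 0]) (by linarith) (hq 4) (by linarith [hq 0])
      (by positivity) (by nlinarith [mul_pos (show (0:ℝ) < 1 - β * ε by linarith) hs3])
      d3n (by rw [show q 4 + q 0 = q 0 + q 4 by ring, show p 4 + p 0 = p 0 + p 4 by ring]; exact d3s)
    calc |q 4 / (q 4 + q 0) - p 4 / (p 4 + p 0)| ≤
        2 * (β * ε * (p 0 + p 4)) / (p 4 + p 0) := h
    _ = 2 * (β * ε) := by rw [show p 4 + p 0 = p 0 + p 4 by ring]; field_simp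
  have hr4 : |q 5 / (q 5 + q 1) - p 5 / (p 5 + p 1)| ≤ 2 * (β * ε) := by
    have h := ratio_dev (p 5) (p 5 + p 1) (q 5) (q 5 + q 1) (β * ε * (p 1 + p 5))
      (hp 5) (by linarith [hp 1]) (by linarith) (hq 5) (by linarith [hq 1])
      (by positivity) (by nlinarith [mul_pos (show (0:ℝ) < 1 - β * ε by linarith) hs4])
      d4n (by rw [show q 5 + q 1 = q 1 + q 5 by ring, show p 5 + p 1 = p 1 + p 5 by ring]; exact d4s)
    calc |q 5 / (q 5 + q 1) - p 5 / (p 5 + p 1)| ≤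
        2 * (β * ε * (p 1 + p 5)) / (p 5 + p 1) := h
    _ = 2 * (β * ε) := by rw [show p 5 + p 1 = p 1 + p 5 by ring]; field_simp
  -- deviation of A-hat
  set Ah : ℝ := q 0 + q 2 + q 4 + q 6 with hAh_def
  have hdA : |Ah - A| < β * ε * A := by
    have h1 : Ah - A = ((q 2 + q 6) - (p 2 + p 6)) + ((q 0 + q 4) - (p 0 + p 4)) := by
      simp only [hAh_def, hA_def]; ring
    have h2 : β * ε * A = β * ε * (p 2 + p 6) + β * ε * (p 0 + p 4) := by
      simp only [hA_def]; ring
    rw [h1, h2]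
    calc |((q 2 + q 6) - (p 2 + p 6)) + ((q 0 + q 4) - (p 0 + p 4))|
        ≤ |(q 2 + q 6) - (p 2 + p 6)| + |(q 0 + q 4) - (p 0 + p 4)| := abs_add_le _ _
    _ < β * ε * (p 2 + p 6) + β * ε * (p 0 + p 4) := by
        exact add_lt_add d1s d3s
  -- empirical ratios in [0,1]
  have hb1 : 0 ≤ q 6 / (q 6 + q 2) := div_nonneg (hq 6) hq26.le
  have hb1' : q 6 / (q 6 + q 2) ≤ 1 := (div_le_one hq26).2 (by linarith [hq 2])
  have hb2 : 0 ≤ q 7 / (q 7 + q 3) := div_nonneg (hq 7) hq37.le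
  have hb2' : q 7 / (q 7 + q 3) ≤ 1 := (div_le_one hq37).2 (by linarith [hq 3])
  have hb3 : 0 ≤ q 4 / (q 4 + q 0) := div_nonneg (hq 4) hq04.le
  have hb3' : q 4 / (q 4 + q 0) ≤ 1 := (div_le_one hq04).2 (by linarith [hq 0])
  have hb4 : 0 ≤ q 5 / (q 5 + q 1) := div_nonneg (hq 5) hq15.le
  have hb4' : q 5 / (q 5 + q 1) ≤ 1 := (div_le_one hq15).2 (by linarith [hq 1])
  have key := ate_error_core A Ah ε β
    (p 6 / (p 6 + p 2)) (p 7 / (p 7 + p 3)) (p 4 / (p 4 + p 0)) (p 5 / (p 5 + p 1))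
    (q 6 / (q 6 + q 2)) (q 7 / (q 7 + q 3)) (q 4 / (q 4 + q 0)) (q 5 / (q 5 + q 1))
    hA0 hA1 (by rw [hβ]) hε0 hb1 hb1' hb2 hb2' hb3 hb3' hb4 hb4' hdA hr1 hr2 hr3 hr4
  have hATEp : ATE p = A * (p 6 / (p 6 + p 2)) + (1 - A) * (p 7 / (p 7 + p 3))
      - A * (p 4 / (p 4 + p 0)) - (1 - A) * (p 5 / (p 5 + p 1)) := by
    rw [ATE]; simp only [hA_def]; ring
  have hATEq : ATE q = Ah * (q 6 / (q 6 + q 2)) + (1 - Ah) * (q 7 / (q 7 + q 3))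
      - Ah * (q 4 / (q 4 + q 0)) - (1 - Ah) * (q 5 / (q 5 + q 1)) := by
    rw [ATE]; simp only [hAh_def]; ring
  rw [hATEp, hATEq]
  exact key


set_option maxHeartbeats 2000000 in
/-- Sample complexity for estimating the ATE without observational data
(Theorem 1 of the paper). -/
theorem ate_sample_complexity_no_observational
    {Ω : Type*} [MeasurableSpace Ω] (μ : Measure Ω) [IsProbabilityMeasure μ]
    (m : ℕ) (hm0 : 0 < m)
    (p : Fin 8 → ℝ) (hp : ∀ j, 0 ≤ p j) (hpsum : ∑ j, p j = 1)
    (V : Fin m → Ω → Fin 8) (hVmeas : ∀ i, Measurable (V i))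
    (hindep : iIndepFun V μ)
    (hdist : ∀ i j, μ {ω | V i ω = j} = ENNReal.ofReal (p j))
    (ε δ : ℝ) (hε0 : 0 < ε) (hε1 : ε ≤ 1) (hδ0 : 0 < δ) (hδ1 : δ < 1)
    (h37 : 0 < p 2 + p 6) (h48 : 0 < p 3 + p 7)
    (h15 : 0 < p 0 + p 4) (h26 : 0 < p 1 + p 5)
    (hm : (m : ℝ) ≥ 18 * Real.log (16 / δ) / ε ^ 2 *
      max (max (1 / (p 2 + p 6) ^ 2) (1 / (p 3 + p 7) ^ 2))
          (max (1 / (p 0 + p 4) ^ 2) (1 / (p 1 + p 5) ^ 2))) :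
    μ {ω | ε ≤
        |ATE (fun j => ((Finset.univ.filter fun i => V i ω = j).card : ℝ) / m) - ATE p|}
      < ENNReal.ofReal δ := by
  classical
  have hm' : (0:ℝ) < m := by exact_mod_cast hm0
  set L : ℝ := Real.log (16 / δ) with hL_def
  have hL : 0 < L := Real.log_pos (by rw [lt_div_iff₀ hδ0]; linarith)
  set A : ℝ := p 0 + p 2 + p 4 + p 6 with hA_def
  have hpsum' : p 0 + p 1 + p 2 + p 3 + p 4 + p 5 + p 6 + p 7 = 1 := by
    rw [← hpsum, Fin.sum_univ_eight]
  have hA0 : 0 < A := by have := hp 0; have := hp 4; simp only [hA_def]; linarith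
  have hA1 : A < 1 := by have := hp 1; have := hp 5; simp only [hA_def]; linarith
  set β : ℝ := 1 / (4 + 2 * A) with hβ_def
  have hβ0 : 0 < β := by rw [hβ_def]; positivity
  have hβ6 : 1 < 6 * β := by
    have h46 : (0:ℝ) < 4 + 2 * A := by linarith
    rw [hβ_def, mul_one_div, lt_div_iff₀ h46]; linarith
  -- basic objects
  set pf : Finset (Fin 8) → ℝ := fun S => ∑ j ∈ S, p j with hpf_def
  set N : Finset (Fin 8) → Ω → ℝ :=
    fun S ω => ∑ i, ((V i ⁻¹' (↑S : Set (Fin 8))).indicator (fun _ => (1:ℝ)) ω) with hN_def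
  have hpf0 : ∀ S, 0 ≤ pf S := fun S => Finset.sum_nonneg (fun j _ => hp j)
  have hpf1 : ∀ S, pf S ≤ 1 := by
    intro S
    rw [← hpsum]
    exact Finset.sum_le_sum_of_subset_of_nonneg (Finset.subset_univ S) (fun j _ _ => hp j)
  have hμS : ∀ (S : Finset (Fin 8)) (i : Fin m),
      μ (V i ⁻¹' (↑S : Set (Fin 8))) = ENNReal.ofReal (pf S) := by
    intro S i
    have hset : V i ⁻¹' (↑S : Set (Fin 8)) = ⋃ j ∈ S, {ω | V i ω = j} := by
      ext ω; simp [Set.mem_preimage]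
    have hdisj : (↑S : Set (Fin 8)).PairwiseDisjoint (fun j => {ω | V i ω = j}) := by
      intro a _ b _ hab
      simp only [Function.onFun, Set.disjoint_left, Set.mem_setOf_eq]
      intro ω h1 h2
      exact hab (h1.symm.trans h2)
    rw [hset, measure_biUnion_finset hdisj
      (fun j _ => (hVmeas i) (MeasurableSet.singleton j))]
    simp_rw [hdist i]
    exact (ENNReal.ofReal_sum_of_nonneg (fun j _ => hp j)).symm
  have hindepS : ∀ S : Finset (Fin 8), iIndepFun
      (fun i (ω : Ω) => ((V i ⁻¹' (↑S : Set (Fin 8))).indicator (fun _ => (1:ℝ)) ω)) μ := by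
    intro S
    have hfun : (fun i (ω : Ω) => ((V i ⁻¹' (↑S : Set (Fin 8))).indicator (fun _ => (1:ℝ)) ω))
        = fun i => ((↑S : Set (Fin 8)).indicator (fun _ => (1:ℝ))) ∘ V i := by
      funext i ω
      by_cases h : V i ω ∈ S <;>
        simp [Set.indicator_apply, Set.mem_preimage, h]
    rw [hfun]
    exact hindep.comp (fun _ => (↑S : Set (Fin 8)).indicator (fun _ => (1:ℝ)))
      (fun _ => Measurable.of_discrete)
  -- tail bounds
  have hup : ∀ (S : Finset (Fin 8)) (τ : ℝ), 0 < τ →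
      μ {ω | (pf S + τ) * m ≤ N S ω} ≤ ENNReal.ofReal (Real.exp (-2 * m * τ ^ 2)) := by
    intro S τ hτ
    exact chernoff_indicator μ (fun i => V i ⁻¹' (↑S : Set (Fin 8)))
      (fun i => (hVmeas i) MeasurableSet.of_discrete) (hindepS S)
      (pf S) (hpf0 S) (hpf1 S) (hμS S) τ hτ
  have hlo : ∀ (S : Finset (Fin 8)) (τ : ℝ), 0 < τ →
      μ {ω | N S ω ≤ (pf S - τ) * m} ≤ ENNReal.ofReal (Real.exp (-2 * m * τ ^ 2)) := by
    intro S τ hτ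
    exact chernoff_indicator_lower μ (fun i => V i ⁻¹' (↑S : Set (Fin 8)))
      (fun i => (hVmeas i) MeasurableSet.of_discrete) (hindepS S)
      (pf S) (hpf0 S) (hpf1 S) (hμS S) τ hτ
  -- counting identity
  have hcard : ∀ (ω : Ω) (S : Finset (Fin 8)),
      ∑ j ∈ S, ((Finset.univ.filter fun i => V i ω = j).card : ℝ) = N S ω := by
    intro ω S
    simp only [hN_def, Finset.card_filter]
    push_cast
    rw [Finset.sum_comm]
    refine Finset.sum_congr rfl (fun i _ => ?_)
    rw [Finset.sum_ite_eq]
    by_cases h : V i ω ∈ S <;> simp [Set.indicator_apply, Set.mem_preimage, h]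
  -- sample size consequences
  have hcoef : (0:ℝ) ≤ 18 * L / ε ^ 2 := by
    apply div_nonneg (by linarith) (by positivity)
  have hmbig : ∀ s : ℝ, 0 < s →
      (18 * L / ε ^ 2 * (1 / s ^ 2) ≤ (m:ℝ)) → 36 * β ^ 2 * L ≤ 2 * m * (β * ε * s) ^ 2 := by
    intro s hs hms
    have h1 : 18 * L / ε ^ 2 * (1 / s ^ 2) = 18 * L / (ε ^ 2 * s ^ 2) := by ring
    rw [h1] at hms
    have h2 : 18 * L ≤ (m:ℝ) * (ε ^ 2 * s ^ 2) := by
      rw [div_le_iff₀ (by positivity)] at hms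
      linarith
    calc 36 * β ^ 2 * L = 2 * β ^ 2 * (18 * L) := by ring
    _ ≤ 2 * β ^ 2 * ((m:ℝ) * (ε ^ 2 * s ^ 2)) := by
        exact mul_le_mul_of_nonneg_left h2 (by positivity)
    _ = 2 * m * (β * ε * s) ^ 2 := by ring
  have hm1 : 36 * β ^ 2 * L ≤ 2 * m * (β * ε * (p 2 + p 6)) ^ 2 := by
    refine hmbig _ h37 (le_trans (mul_le_mul_of_nonneg_left ?_ hcoef) hm)
    exact le_max_of_le_left (le_max_left _ _)
  have hm2 : 36 * β ^ 2 * L ≤ 2 * m * (β * ε * (p 3 + p 7)) ^ 2 := by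
    refine hmbig _ h48 (le_trans (mul_le_mul_of_nonneg_left ?_ hcoef) hm)
    exact le_max_of_le_left (le_max_right _ _)
  have hm3 : 36 * β ^ 2 * L ≤ 2 * m * (β * ε * (p 0 + p 4)) ^ 2 := by
    refine hmbig _ h15 (le_trans (mul_le_mul_of_nonneg_left ?_ hcoef) hm)
    exact le_max_of_le_right (le_max_left _ _)
  have hm4 : 36 * β ^ 2 * L ≤ 2 * m * (β * ε * (p 1 + p 5)) ^ 2 := by
    refine hmbig _ h26 (le_trans (mul_le_mul_of_nonneg_left ?_ hcoef) hm)
    exact le_max_of_le_right (le_max_right _ _)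
  -- the uniform bound for each tail event
  set C : ENNReal := ENNReal.ofReal (Real.exp (-(36 * β ^ 2 * L))) with hC_def
  have htail : ∀ (S : Finset (Fin 8)) (s : ℝ), 0 < s →
      (36 * β ^ 2 * L ≤ 2 * m * (β * ε * s) ^ 2) →
      μ ({ω | (pf S + β * ε * s) * m ≤ N S ω} ∪ {ω | N S ω ≤ (pf S - β * ε * s) * m})
        ≤ 2 * C := by
    intro S s hs hbig
    have hτ : 0 < β * ε * s := by positivity
    have hexp : ENNReal.ofReal (Real.exp (-2 * m * (β * ε * s) ^ 2)) ≤ C := by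
      rw [hC_def]
      apply ENNReal.ofReal_le_ofReal
      apply Real.exp_le_exp.2
      linarith
    calc μ ({ω | (pf S + β * ε * s) * m ≤ N S ω} ∪ {ω | N S ω ≤ (pf S - β * ε * s) * m})
        ≤ μ {ω | (pf S + β * ε * s) * m ≤ N S ω} + μ {ω | N S ω ≤ (pf S - β * ε * s) * m} :=
          measure_union_le _ _
    _ ≤ ENNReal.ofReal (Real.exp (-2 * m * (β * ε * s) ^ 2))
          + ENNReal.ofReal (Real.exp (-2 * m * (β * ε * s) ^ 2)) :=
          add_le_add (hup S _ hτ) (hlo S _ hτ)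
    _ = 2 * ENNReal.ofReal (Real.exp (-2 * m * (β * ε * s) ^ 2)) := (two_mul _).symm
    _ ≤ 2 * C := by
        exact mul_le_mul_right hexp 2
  -- deviation events
  set Dev : Finset (Fin 8) → ℝ → Set Ω := fun S s =>
    {ω | (pf S + β * ε * s) * m ≤ N S ω} ∪ {ω | N S ω ≤ (pf S - β * ε * s) * m} with hDev_def
  have hD1 : μ (Dev {6} (p 2 + p 6)) ≤ 2 * C := htail _ _ h37 hm1
  have hD2 : μ (Dev {2, 6} (p 2 + p 6)) ≤ 2 * C := htail _ _ h37 hm1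
  have hD3 : μ (Dev {7} (p 3 + p 7)) ≤ 2 * C := htail _ _ h48 hm2
  have hD4 : μ (Dev {3, 7} (p 3 + p 7)) ≤ 2 * C := htail _ _ h48 hm2
  have hD5 : μ (Dev {4} (p 0 + p 4)) ≤ 2 * C := htail _ _ h15 hm3
  have hD6 : μ (Dev {0, 4} (p 0 + p 4)) ≤ 2 * C := htail _ _ h15 hm3
  have hD7 : μ (Dev {5} (p 1 + p 5)) ≤ 2 * C := htail _ _ h26 hm4
  have hD8 : μ (Dev {1, 5} (p 1 + p 5)) ≤ 2 * C := htail _ _ h26 hm4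
  -- inclusion of the bad event
  have hdev2 : ∀ (ω : Ω) (S : Finset (Fin 8)) (s : ℝ),
      N S ω < (pf S + β * ε * s) * m → (pf S - β * ε * s) * m < N S ω →
      |N S ω / m - pf S| < β * ε * s := by
    intro ω S s hup' hlo'
    rw [abs_lt]
    constructor
    · have := (lt_div_iff₀ hm').2 hlo'
      linarith
    · have := (div_lt_iff₀ hm').2 hup'
      linarith
  have hsub : {ω | ε ≤
        |ATE (fun j => ((Finset.univ.filter fun i => V i ω = j).card : ℝ) / m) - ATE p|}
      ⊆ Dev {6} (p 2 + p 6) ∪ (Dev {2, 6} (p 2 + p 6) ∪ (Dev {7} (p 3 + p 7)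
        ∪ (Dev {3, 7} (p 3 + p 7) ∪ (Dev {4} (p 0 + p 4) ∪ (Dev {0, 4} (p 0 + p 4)
        ∪ (Dev {5} (p 1 + p 5) ∪ Dev {1, 5} (p 1 + p 5))))))) := by
    intro ω hω
    simp only [Set.mem_setOf_eq] at hω
    by_contra hno
    simp only [hDev_def, Set.mem_union, Set.mem_setOf_eq, not_or, not_le] at hno
    obtain ⟨⟨h1a, h1b⟩, ⟨h2a, h2b⟩, ⟨h3a, h3b⟩, ⟨h4a, h4b⟩, ⟨h5a, h5b⟩, ⟨h6a, h6b⟩,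
      ⟨h7a, h7b⟩, ⟨h8a, h8b⟩⟩ := hno
    have a1 := hdev2 ω {6} (p 2 + p 6) h1a h1b
    have a2 := hdev2 ω {2, 6} (p 2 + p 6) h2a h2b
    have a3 := hdev2 ω {7} (p 3 + p 7) h3a h3b
    have a4 := hdev2 ω {3, 7} (p 3 + p 7) h4a h4b
    have a5 := hdev2 ω {4} (p 0 + p 4) h5a h5b
    have a6 := hdev2 ω {0, 4} (p 0 + p 4) h6a h6b
    have a7 := hdev2 ω {5} (p 1 + p 5) h7a h7b
    have a8 := hdev2 ω {1, 5} (p 1 + p 5) h8a h8b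
    -- rewrite counts
    have c6 : ((Finset.univ.filter fun i => V i ω = (6 : Fin 8)).card : ℝ) = N {6} ω := by
      rw [← hcard ω {6}, Finset.sum_singleton]
    have c7 : ((Finset.univ.filter fun i => V i ω = (7 : Fin 8)).card : ℝ) = N {7} ω := by
      rw [← hcard ω {7}, Finset.sum_singleton]
    have c4 : ((Finset.univ.filter fun i => V i ω = (4 : Fin 8)).card : ℝ) = N {4} ω := by
      rw [← hcard ω {4}, Finset.sum_singleton]
    have c5 : ((Finset.univ.filter fun i => V i ω = (5 : Fin 8)).card : ℝ) = N {5} ω := by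
      rw [← hcard ω {5}, Finset.sum_singleton]
    have c26 : ((Finset.univ.filter fun i => V i ω = (2 : Fin 8)).card : ℝ)
        + ((Finset.univ.filter fun i => V i ω = (6 : Fin 8)).card : ℝ) = N {2, 6} ω := by
      rw [← hcard ω {2, 6}, Finset.sum_pair (by decide : (2 : Fin 8) ≠ 6)]
    have c37 : ((Finset.univ.filter fun i => V i ω = (3 : Fin 8)).card : ℝ)
        + ((Finset.univ.filter fun i => V i ω = (7 : Fin 8)).card : ℝ) = N {3, 7} ω := by
      rw [← hcard ω {3, 7}, Finset.sum_pair (by decide : (3 : Fin 8) ≠ 7)]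
    have c04 : ((Finset.univ.filter fun i => V i ω = (0 : Fin 8)).card : ℝ)
        + ((Finset.univ.filter fun i => V i ω = (4 : Fin 8)).card : ℝ) = N {0, 4} ω := by
      rw [← hcard ω {0, 4}, Finset.sum_pair (by decide : (0 : Fin 8) ≠ 4)]
    have c15 : ((Finset.univ.filter fun i => V i ω = (1 : Fin 8)).card : ℝ)
        + ((Finset.univ.filter fun i => V i ω = (5 : Fin 8)).card : ℝ) = N {1, 5} ω := by
      rw [← hcard ω {1, 5}, Finset.sum_pair (by decide : (1 : Fin 8) ≠ 5)]
    have pf6 : pf {6} = p 6 := Finset.sum_singleton _ _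
    have pf7 : pf {7} = p 7 := Finset.sum_singleton _ _
    have pf4 : pf {4} = p 4 := Finset.sum_singleton _ _
    have pf5 : pf {5} = p 5 := Finset.sum_singleton _ _
    have pf26 : pf {2, 6} = p 2 + p 6 := Finset.sum_pair (by decide : (2 : Fin 8) ≠ 6)
    have pf37 : pf {3, 7} = p 3 + p 7 := Finset.sum_pair (by decide : (3 : Fin 8) ≠ 7)
    have pf04 : pf {0, 4} = p 0 + p 4 := Finset.sum_pair (by decide : (0 : Fin 8) ≠ 4)
    have pf15 : pf {1, 5} = p 1 + p 5 := Finset.sum_pair (by decide : (1 : Fin 8) ≠ 5)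
    rw [pf6] at a1
    rw [← c6] at a1
    rw [pf26, ← c26, add_div] at a2
    rw [pf7] at a3
    rw [← c7] at a3
    rw [pf37, ← c37, add_div] at a4
    rw [pf4] at a5
    rw [← c4] at a5
    rw [pf04, ← c04, add_div] at a6
    rw [pf5] at a7
    rw [← c5] at a7
    rw [pf15, ← c15, add_div] at a8
    have hkey := ate_dev_lt p
      (fun j => ((Finset.univ.filter fun i => V i ω = j).card : ℝ) / m) ε hε0 hε1 hp
      (fun j => div_nonneg (Nat.cast_nonneg _) hm'.le)
      h37 h48 h15 h26 hpsum β (by rw [hβ_def, hA_def])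
      a1 a2 a3 a4 a5 a6 a7 a8
    linarith [hω, hkey]
  -- union bound
  have hfinal : μ {ω | ε ≤
        |ATE (fun j => ((Finset.univ.filter fun i => V i ω = j).card : ℝ) / m) - ATE p|}
      ≤ 16 * C := by
    refine (measure_mono hsub).trans ?_
    have hchain : μ (Dev {6} (p 2 + p 6) ∪ (Dev {2, 6} (p 2 + p 6) ∪ (Dev {7} (p 3 + p 7)
        ∪ (Dev {3, 7} (p 3 + p 7) ∪ (Dev {4} (p 0 + p 4) ∪ (Dev {0, 4} (p 0 + p 4)
        ∪ (Dev {5} (p 1 + p 5) ∪ Dev {1, 5} (p 1 + p 5))))))))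
        ≤ 2 * C + (2 * C + (2 * C + (2 * C + (2 * C + (2 * C + (2 * C + 2 * C)))))) := by
      refine (measure_union_le _ _).trans (add_le_add hD1 ?_)
      refine (measure_union_le _ _).trans (add_le_add hD2 ?_)
      refine (measure_union_le _ _).trans (add_le_add hD3 ?_)
      refine (measure_union_le _ _).trans (add_le_add hD4 ?_)
      refine (measure_union_le _ _).trans (add_le_add hD5 ?_)
      refine (measure_union_le _ _).trans (add_le_add hD6 ?_)
      exact (measure_union_le _ _).trans (add_le_add hD7 hD8)
    refine hchain.trans (le_of_eq ?_)
    ring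
  refine lt_of_le_of_lt hfinal ?_
  have hreal : 16 * Real.exp (-(36 * β ^ 2 * L)) < δ := by
    have h36 : 1 < 36 * β ^ 2 := by nlinarith [hβ6, hβ0]
    have h1 : Real.exp (-(36 * β ^ 2 * L)) < Real.exp (-L) := by
      apply Real.exp_lt_exp.2
      nlinarith [mul_pos hL (show (0:ℝ) < 36 * β ^ 2 - 1 by linarith)]
    have h2 : Real.exp (-L) = δ / 16 := by
      rw [hL_def, Real.exp_neg, Real.exp_log (by positivity), inv_div]
    linarith
  have hC16 : (16 : ENNReal) * C = ENNReal.ofReal (16 * Real.exp (-(36 * β ^ 2 * L))) := by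
    rw [hC_def, ENNReal.ofReal_mul (by norm_num : (0:ℝ) ≤ 16)]
    norm_num
  rw [hC16]
  exact (ENNReal.ofReal_lt_ofReal_iff hδ0).2 hreal
end

section
/- With infinite observational data and sampling according to the distribution: in the stratified sampling model with allocation (x_1, x_2, x_3, x_4) = (a_1, a_2, a_3, a_4), suppose 0 < ε ≤ 1, 0 < δ < 1, each x_j·m is a positive integer, and p_3+p_7 > 0, p_4+p_8 > 0, p_1+p_5 > 0, p_2+p_6 > 0. If m ≥ (18 ln(8/δ)/ε²) · max( (a_2+a_4)/min((p_3+p_7)², (p_4+p_8)²), (a_1+a_3)/min((p_1+p_5)², (p_2+p_6)²) ), then P(|ATE-hat − ATE(p_1,...,p_8)| ≥ ε) < δ. -/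
open MeasureTheory ProbabilityTheory

/-- The joint distribution `p` of `(Y,T,Z)` obtained from the observational
distribution `a` of `(Y,T)` and the conditional probabilities
`q j = P(Z=0 | (Y,T) = j-th outcome)`:
`p_1 = a_1 q_1, p_2 = a_1(1-q_1), ..., p_8 = a_4(1-q_4)`. -/
noncomputable def pOf (a q : Fin 4 → ℝ) : Fin 8 → ℝ :=
  ![a 0 * q 0, a 0 * (1 - q 0), a 1 * q 1, a 1 * (1 - q 1),
    a 2 * q 2, a 2 * (1 - q 2), a 3 * q 3, a 3 * (1 - q 3)]

lemma bernoulli_mgf_le_s1 {q : ℝ} (h0 : 0 ≤ q) (h1 : q ≤ 1) (s : ℝ) :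
    1 - q + q * Real.exp s ≤ Real.exp (q * s + s ^ 2 / 8) := by
  have hd : ∀ x : ℝ, 0 < 1 - q + q * Real.exp x := by
    intro x
    nlinarith [Real.exp_pos x, mul_nonneg h0 (Real.exp_pos x).le,
      mul_nonneg (sub_nonneg.2 h1) (Real.exp_pos x).le]
  set f : ℝ → ℝ := fun x => q * x + x ^ 2 / 8 - Real.log (1 - q + q * Real.exp x) with hf
  set f1 : ℝ → ℝ := fun x => q + x / 4 - q * Real.exp x / (1 - q + q * Real.exp x) with hf1
  have hder : ∀ x, HasDerivAt f (f1 x) x := by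
    intro x
    have h1' : HasDerivAt (fun x : ℝ => 1 - q + q * Real.exp x) (q * Real.exp x) x := by
      simpa using ((Real.hasDerivAt_exp x).const_mul q).const_add (1 - q)
    have h2' : HasDerivAt (fun x : ℝ => q * x + x ^ 2 / 8) (q + 2 * x / 8) x := by
      exact (((hasDerivAt_id x).const_mul q).add ((hasDerivAt_pow 2 x).div_const 8)).congr_deriv (by norm_num)
    have := h2'.sub (h1'.log (hd x).ne')
    refine this.congr_deriv ?_
    simp only [hf1]
    ring
  have hder1 : ∀ x, HasDerivAt f1
      (1 / 4 - (q * Real.exp x * (1 - q + q * Real.exp x)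
        - q * Real.exp x * (q * Real.exp x)) / (1 - q + q * Real.exp x) ^ 2) x := by
    intro x
    have h1' : HasDerivAt (fun x : ℝ => 1 - q + q * Real.exp x) (q * Real.exp x) x := by
      simpa using ((Real.hasDerivAt_exp x).const_mul q).const_add (1 - q)
    have h2' : HasDerivAt (fun x : ℝ => q * Real.exp x) (q * Real.exp x) x :=
      (Real.hasDerivAt_exp x).const_mul q
    have hq' : HasDerivAt (fun x : ℝ => q * Real.exp x / (1 - q + q * Real.exp x))
        ((q * Real.exp x * (1 - q + q * Real.exp x)
          - q * Real.exp x * (q * Real.exp x)) / (1 - q + q * Real.exp x) ^ 2) x :=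
      h2'.div h1' (hd x).ne'
    have h3' : HasDerivAt (fun x : ℝ => q + x / 4) (1 / 4) x := by
      simpa using ((hasDerivAt_id x).div_const 4).const_add q
    exact h3'.sub hq'
  have hf1mono : Monotone f1 := by
    apply monotone_of_deriv_nonneg (fun x => (hder1 x).differentiableAt)
    intro x
    rw [(hder1 x).deriv]
    have h4 : ∀ d u : ℝ, 0 < d → (u * d - u * u) / d ^ 2 ≤ 1 / 4 := by
      intro d u hdx
      rw [div_le_iff₀ (by positivity)]
      nlinarith [sq_nonneg (d - 2 * u)]
    linarith [h4 _ (q * Real.exp x) (hd x)]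
  have hf10 : f1 0 = 0 := by simp [hf1]
  have hf0 : f 0 = 0 := by simp [hf]
  have hfd : Differentiable ℝ f := fun x => (hder x).differentiableAt
  have key : 0 ≤ f s := by
    rcases le_or_gt 0 s with hs | hs
    · have hmono := monotoneOn_of_deriv_nonneg (convex_Ici 0)
        hfd.continuous.continuousOn hfd.differentiableOn
        (fun x hx => by
          rw [(hder x).deriv]
          rw [interior_Ici] at hx
          calc (0:ℝ) = f1 0 := hf10.symm
            _ ≤ f1 x := hf1mono (le_of_lt hx))
      have := hmono (Set.self_mem_Ici) (show s ∈ Set.Ici (0:ℝ) from hs) hs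
      rwa [hf0] at this
    · have hanti := antitoneOn_of_deriv_nonpos (convex_Iic 0)
        hfd.continuous.continuousOn hfd.differentiableOn
        (fun x hx => by
          rw [(hder x).deriv]
          rw [interior_Iic] at hx
          calc f1 x ≤ f1 0 := hf1mono (le_of_lt hx)
            _ = 0 := hf10)
      have := hanti (show s ∈ Set.Iic (0:ℝ) from hs.le) (Set.self_mem_Iic) hs.le
      rwa [hf0] at this
  have : Real.log (1 - q + q * Real.exp s) ≤ q * s + s ^ 2 / 8 := by
    simp only [hf] at key; linarith
  calc 1 - q + q * Real.exp s = Real.exp (Real.log (1 - q + q * Real.exp s)) :=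
        (Real.exp_log (hd s)).symm
    _ ≤ _ := Real.exp_le_exp.2 this

lemma iIndepFun_precomp {Ω ι ι' : Type*} [MeasurableSpace Ω] {μ : Measure Ω}
    {β : Type*} [mβ : MeasurableSpace β] {f : ι → Ω → β} (g : ι' → ι)
    (hg : Function.Injective g) (h : iIndepFun f μ) :
    iIndepFun (fun i => f (g i)) μ := by
  rw [iIndepFun_iff_measure_inter_preimage_eq_mul] at h ⊢
  intro s sets hsets
  classical
  have h' := h (s.map ⟨g, hg⟩) (sets := Function.extend g sets fun _ => Set.univ) ?_
  · have e1 : (⋂ i ∈ s.map ⟨g, hg⟩, f i ⁻¹' Function.extend g sets (fun _ => Set.univ) i)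
        = ⋂ i ∈ s, f (g i) ⁻¹' sets i := by
      ext ω
      simp only [Set.mem_iInter, Finset.mem_map, Function.Embedding.coeFn_mk]
      constructor
      · intro hh i hi
        have := hh (g i) ⟨i, hi, rfl⟩
        rwa [hg.extend_apply] at this
      · rintro hh j ⟨i, hi, rfl⟩
        rw [hg.extend_apply]
        exact hh i hi
    have e2 : (∏ i ∈ s.map ⟨g, hg⟩, μ (f i ⁻¹' Function.extend g sets (fun _ => Set.univ) i))
        = ∏ i ∈ s, μ (f (g i) ⁻¹' sets i) := by
      rw [Finset.prod_map]
      refine Finset.prod_congr rfl fun i _ => by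
        simp [hg.extend_apply]
    rw [e1, e2] at h'
    exact h'
  · intro i hi
    rcases Finset.mem_map.1 hi with ⟨i', hi', rfl⟩
    simp only [Function.Embedding.coeFn_mk]
    rw [hg.extend_apply]
    exact hsets i' hi'

lemma stratum_tail {Ω : Type*} [MeasurableSpace Ω] (μ : Measure Ω) [IsProbabilityMeasure μ]
    {n : ℕ} (hn : 0 < n) (V : Fin n → Ω → Bool) (hV : ∀ i, Measurable (V i))
    (hind : iIndepFun V μ)
    {q : ℝ} (hq0 : 0 ≤ q) (hq1 : q ≤ 1)
    (hdist : ∀ i, μ {ω | V i ω = true} = ENNReal.ofReal q)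
    {t : ℝ} (ht : 0 < t) :
    μ {ω | t ≤ |((Finset.univ.filter fun i => V i ω = true).card : ℝ) / n - q|}
      ≤ ENNReal.ofReal (2 * Real.exp (-2 * n * t ^ 2)) := by
  classical
  set X : Fin n → Ω → ℝ := fun i ω => if V i ω = true then 1 else 0 with hX
  have hXmeas : ∀ i, Measurable (X i) := fun i =>
    (Measurable.of_discrete (f := fun b : Bool => if b = true then (1:ℝ) else 0)).comp (hV i)
  have hXind : iIndepFun X μ :=
    hind.comp (fun _ b => if b = true then (1:ℝ) else 0) (fun _ => .of_discrete)
  have hX01 : ∀ i ω, X i ω = 0 ∨ X i ω = 1 := by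
    intro i ω; by_cases h : V i ω = true <;> simp [hX, h]
  have hXint : ∀ (s : ℝ) (i : Fin n), Integrable (fun ω => Real.exp (s * X i ω)) μ := by
    intro s i
    refine Integrable.mono' (integrable_const (Real.exp |s|))
      (((hXmeas i).const_mul s).exp.aestronglyMeasurable) (ae_of_all _ fun ω => ?_)
    rw [Real.norm_eq_abs, abs_of_pos (Real.exp_pos _)]
    apply Real.exp_le_exp.2
    rcases hX01 i ω with h | h <;> rw [h]
    · simpa using abs_nonneg s
    · simpa using le_abs_self s
  have hSint : ∀ s : ℝ, Integrable (fun ω => Real.exp (s * (∑ i, X i) ω)) μ :=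
    fun s => iIndepFun.integrable_exp_mul_sum hXind hXmeas (fun i _ => hXint s i)
  have hXione : ∀ i, Integrable (X i) μ := by
    intro i
    have : X i = Set.indicator {ω | V i ω = true} (fun _ => (1:ℝ)) := by
      funext ω; by_cases h : V i ω = true <;> simp [hX, h, Set.indicator]
    rw [this]
    exact (integrable_const 1).indicator (hV i (measurableSet_singleton true))
  have hXinteg : ∀ i, ∫ ω, X i ω ∂μ = q := by
    intro i
    have h1 : X i = Set.indicator {ω | V i ω = true} (fun _ => (1:ℝ)) := by
      funext ω; by_cases h : V i ω = true <;> simp [hX, h, Set.indicator]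
    have hms : MeasurableSet {ω | V i ω = true} := hV i (measurableSet_singleton true)
    rw [h1, integral_indicator_const (1:ℝ) hms, measureReal_def, hdist i,
      ENNReal.toReal_ofReal hq0, smul_eq_mul, mul_one]
  have hmgf : ∀ s : ℝ, mgf (∑ i, X i) μ s = (1 + (Real.exp s - 1) * q) ^ n := by
    intro s
    rw [hXind.mgf_sum hXmeas Finset.univ]
    have hone : ∀ i : Fin n, mgf (X i) μ s = 1 + (Real.exp s - 1) * q := by
      intro i
      have hXeq : (fun ω => Real.exp (s * X i ω))
          = fun ω => 1 + (Real.exp s - 1) * X i ω := by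
        funext ω; by_cases h : V i ω = true <;> simp [hX, h]
      rw [mgf, hXeq, integral_add (integrable_const 1) ((hXione i).const_mul _),
        integral_const, integral_const_mul, hXinteg i]
      simp
    rw [Finset.prod_congr rfl (fun i _ => hone i), Finset.prod_const, Finset.card_univ,
      Fintype.card_fin]
  have hbase_pos : ∀ s : ℝ, (0:ℝ) < 1 + (Real.exp s - 1) * q := by
    intro s
    nlinarith [Real.exp_pos s, mul_nonneg hq0 (Real.exp_pos s).le,
      mul_nonneg (sub_nonneg.2 hq1) (Real.exp_pos s).le]
  have hmgf_le : ∀ s : ℝ, mgf (∑ i, X i) μ s ≤ Real.exp ((n : ℝ) * (q * s + s ^ 2 / 8)) := by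
    intro s
    rw [hmgf]
    calc (1 + (Real.exp s - 1) * q) ^ n ≤ (Real.exp (q * s + s ^ 2 / 8)) ^ n := by
          apply pow_le_pow_left₀ (hbase_pos s).le
          have := bernoulli_mgf_le_s1 hq0 hq1 s
          linarith
      _ = Real.exp ((n : ℝ) * (q * s + s ^ 2 / 8)) := by
          rw [← Real.exp_nat_mul]
  have hnpos : (0:ℝ) < n := Nat.cast_pos.2 hn
  have hcard : ∀ ω, ((Finset.univ.filter fun i => V i ω = true).card : ℝ) = (∑ i, X i) ω := by
    intro ω
    simp only [Finset.sum_apply, hX]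
    rw [Finset.sum_boole]
  -- two tails
  have h1 : (μ {ω | (n:ℝ) * (q + t) ≤ (∑ i, X i) ω}).toReal ≤ Real.exp (-2 * n * t ^ 2) := by
    refine (measure_ge_le_exp_mul_mgf ((n:ℝ) * (q + t)) (t := 4 * t) (by positivity)
      (hSint _)).trans ?_
    calc Real.exp (-(4 * t) * ((n:ℝ) * (q + t))) * mgf (∑ i, X i) μ (4 * t)
        ≤ Real.exp (-(4 * t) * ((n:ℝ) * (q + t)))
            * Real.exp ((n:ℝ) * (q * (4 * t) + (4 * t) ^ 2 / 8)) := by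
          exact mul_le_mul_of_nonneg_left (hmgf_le _) (Real.exp_pos _).le
      _ = Real.exp (-2 * n * t ^ 2) := by rw [← Real.exp_add]; congr 1; ring
  have h2 : (μ {ω | (∑ i, X i) ω ≤ (n:ℝ) * (q - t)}).toReal ≤ Real.exp (-2 * n * t ^ 2) := by
    refine (measure_le_le_exp_mul_mgf ((n:ℝ) * (q - t)) (t := -(4 * t))
      (by linarith) (hSint _)).trans ?_
    calc Real.exp (-(-(4 * t)) * ((n:ℝ) * (q - t))) * mgf (∑ i, X i) μ (-(4 * t))
        ≤ Real.exp (-(-(4 * t)) * ((n:ℝ) * (q - t)))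
            * Real.exp ((n:ℝ) * (q * (-(4 * t)) + (-(4 * t)) ^ 2 / 8)) := by
          exact mul_le_mul_of_nonneg_left (hmgf_le _) (Real.exp_pos _).le
      _ = Real.exp (-2 * n * t ^ 2) := by rw [← Real.exp_add]; congr 1; ring
  have hsub : {ω | t ≤ |((Finset.univ.filter fun i => V i ω = true).card : ℝ) / n - q|}
      ⊆ {ω | (n:ℝ) * (q + t) ≤ (∑ i, X i) ω} ∪ {ω | (∑ i, X i) ω ≤ (n:ℝ) * (q - t)} := by
    intro ω hω
    simp only [Set.mem_setOf_eq, hcard ω] at hω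
    rcases le_abs.1 hω with h | h
    · left
      have : q + t ≤ (∑ i, X i) ω / n := by linarith
      simp only [Set.mem_setOf_eq]
      calc (n:ℝ) * (q + t) ≤ (n:ℝ) * ((∑ i, X i) ω / n) := by
            exact mul_le_mul_of_nonneg_left this hnpos.le
        _ = (∑ i, X i) ω := by field_simp
    · right
      have : (∑ i, X i) ω / n ≤ q - t := by linarith
      simp only [Set.mem_setOf_eq]
      calc (∑ i, X i) ω = (n:ℝ) * ((∑ i, X i) ω / n) := by field_simp
        _ ≤ (n:ℝ) * (q - t) := mul_le_mul_of_nonneg_left this hnpos.le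
  calc μ _ ≤ μ ({ω | (n:ℝ) * (q + t) ≤ (∑ i, X i) ω}
        ∪ {ω | (∑ i, X i) ω ≤ (n:ℝ) * (q - t)}) := measure_mono hsub
    _ ≤ μ {ω | (n:ℝ) * (q + t) ≤ (∑ i, X i) ω}
        + μ {ω | (∑ i, X i) ω ≤ (n:ℝ) * (q - t)} := measure_union_le _ _
    _ ≤ ENNReal.ofReal (Real.exp (-2 * n * t ^ 2)) + ENNReal.ofReal (Real.exp (-2 * n * t ^ 2)) := by
        gcongr
        · rw [← ENNReal.ofReal_toReal (measure_ne_top μ _)]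
          exact ENNReal.ofReal_le_ofReal h1
        · rw [← ENNReal.ofReal_toReal (measure_ne_top μ _)]
          exact ENNReal.ofReal_le_ofReal h2
    _ = ENNReal.ofReal (2 * Real.exp (-2 * n * t ^ 2)) := by
        rw [← ENNReal.ofReal_add (Real.exp_pos _).le (Real.exp_pos _).le]
        congr 1; ring

lemma ratio_perturb {u v u' v' ε : ℝ} (hu : 0 ≤ u) (hv : 0 ≤ v)
    (hε : 0 < ε) (hD : 0 < u + v)
    (h1 : |u' - u| ≤ ε * (u + v) / (4 * Real.sqrt 2))
    (h2 : |v' - v| ≤ ε * (u + v) / (4 * Real.sqrt 2))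
    (h3 : |u' - u| + |v' - v| ≤ (u + v) / 4) :
    |u' / (u' + v') - u / (u + v)| ≤ ε / (3 * Real.sqrt 2) := by
  have hs2 : (0:ℝ) < Real.sqrt 2 := Real.sqrt_pos.2 (by norm_num)
  have hs2sq : Real.sqrt 2 ^ 2 = 2 := Real.sq_sqrt (by norm_num)
  have hD' : 3 * (u + v) / 4 ≤ u' + v' := by
    have e1 := neg_abs_le (u' - u)
    have e2 := neg_abs_le (v' - v)
    linarith
  have h0' : 0 < u' + v' := lt_of_lt_of_le (by linarith) hD'
  have key : u' / (u' + v') - u / (u + v)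
      = ((u' - u) * v - u * (v' - v)) / ((u' + v') * (u + v)) := by
    field_simp
    ring
  rw [key, abs_div]
  have hnum : |(u' - u) * v - u * (v' - v)| ≤ (u + v) * (ε * (u + v) / (4 * Real.sqrt 2)) := by
    calc |(u' - u) * v - u * (v' - v)| ≤ |(u' - u) * v| + |u * (v' - v)| := abs_sub _ _
      _ = |u' - u| * v + u * |v' - v| := by
          rw [abs_mul, abs_mul, abs_of_nonneg hv, abs_of_nonneg hu]
      _ ≤ (ε * (u + v) / (4 * Real.sqrt 2)) * v + u * (ε * (u + v) / (4 * Real.sqrt 2)) := by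
          have hb : 0 ≤ ε * (u + v) / (4 * Real.sqrt 2) := by positivity
          gcongr
      _ = (u + v) * (ε * (u + v) / (4 * Real.sqrt 2)) := by ring
  have hden : |(u' + v') * (u + v)| = (u' + v') * (u + v) :=
    abs_of_pos (mul_pos h0' hD)
  rw [hden]
  calc |(u' - u) * v - u * (v' - v)| / ((u' + v') * (u + v))
      ≤ ((u + v) * (ε * (u + v) / (4 * Real.sqrt 2))) / ((3 * (u + v) / 4) * (u + v)) := by
        apply div_le_div₀ (by positivity) hnum (by positivity)
        exact mul_le_mul_of_nonneg_right hD' hD.le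
    _ = ε / (3 * Real.sqrt 2) := by
        field_simp
  done

lemma combine_perturb {S S' R Q R' Q' ε : ℝ} (hS0 : 0 ≤ S') (hS1 : S' ≤ 1)
    (hRQ : |R - Q| ≤ 2)
    (h1 : |R' - R| ≤ 2 * (ε / (3 * Real.sqrt 2)))
    (h2 : |Q' - Q| ≤ 2 * (ε / (3 * Real.sqrt 2)))
    (h3 : |S' - S| ≤ ε / 4) (hε : 0 < ε) :
    |(S' * R' + (1 - S') * Q') - (S * R + (1 - S) * Q)| < ε := by
  have hs2 : (0:ℝ) < Real.sqrt 2 := Real.sqrt_pos.2 (by norm_num)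
  have hs2sq : Real.sqrt 2 ^ 2 = 2 := Real.sq_sqrt (by norm_num)
  have hs2lt : Real.sqrt 2 < 3 / 2 := by nlinarith
  have hid : (S' * R' + (1 - S') * Q') - (S * R + (1 - S) * Q)
      = S' * (R' - R) + (1 - S') * (Q' - Q) + (S' - S) * (R - Q) := by ring
  rw [hid]
  calc |S' * (R' - R) + (1 - S') * (Q' - Q) + (S' - S) * (R - Q)|
      ≤ |S' * (R' - R) + (1 - S') * (Q' - Q)| + |(S' - S) * (R - Q)| := abs_add_le _ _
    _ ≤ |S' * (R' - R)| + |(1 - S') * (Q' - Q)| + |(S' - S) * (R - Q)| := by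
        have := abs_add_le (S' * (R' - R)) ((1 - S') * (Q' - Q))
        linarith
    _ ≤ S' * (2 * (ε / (3 * Real.sqrt 2))) + (1 - S') * (2 * (ε / (3 * Real.sqrt 2)))
        + (ε / 4) * 2 := by
        have b1 : |S' * (R' - R)| ≤ S' * (2 * (ε / (3 * Real.sqrt 2))) := by
          rw [abs_mul, abs_of_nonneg hS0]
          exact mul_le_mul_of_nonneg_left h1 hS0
        have b2 : |(1 - S') * (Q' - Q)| ≤ (1 - S') * (2 * (ε / (3 * Real.sqrt 2))) := by
          rw [abs_mul, abs_of_nonneg (by linarith : (0:ℝ) ≤ 1 - S')]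
          exact mul_le_mul_of_nonneg_left h2 (by linarith)
        have b3 : |(S' - S) * (R - Q)| ≤ (ε / 4) * 2 := by
          rw [abs_mul]
          exact mul_le_mul h3 hRQ (abs_nonneg _) (by linarith)
        linarith
    _ = 2 * ε / (3 * Real.sqrt 2) + ε / 2 := by ring
    _ < ε := by
        have hs2gt : (4:ℝ)/3 < Real.sqrt 2 := by nlinarith
        have hfin : 2 * ε / (3 * Real.sqrt 2) < ε / 2 := by
          rw [div_lt_iff₀ (by positivity)]
          nlinarith
        linarith

lemma sq_le_imp {x y : ℝ} (hx : 0 ≤ x) (hy : 0 ≤ y) (h : x ^ 2 ≤ y ^ 2) : x ≤ y := by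
  nlinarith

lemma sqrt_pair_bound {L m A B D ε : ℝ} (hL : 0 < L) (hm : 0 < m) (hA : 0 < A) (hB : 0 < B)
    (hD : 0 < D) (hε : 0 < ε)
    (hbig : 18 * L / ε ^ 2 * ((A + B) / D ^ 2) ≤ m) :
    A * Real.sqrt (9 * L / (16 * (A * m))) + B * Real.sqrt (9 * L / (16 * (B * m)))
        ≤ ε * D / 4
    ∧ A * Real.sqrt (9 * L / (16 * (A * m))) ≤ ε * D / (4 * Real.sqrt 2)
    ∧ B * Real.sqrt (9 * L / (16 * (B * m))) ≤ ε * D / (4 * Real.sqrt 2) := by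
  have hs2 : (0:ℝ) < Real.sqrt 2 := Real.sqrt_pos.2 (by norm_num)
  have hs2sq : Real.sqrt 2 ^ 2 = 2 := Real.sq_sqrt (by norm_num)
  have key : 18 * L * (A + B) ≤ m * (ε ^ 2 * D ^ 2) := by
    rw [div_mul_div_comm] at hbig
    exact (div_le_iff₀ (by positivity)).1 hbig
  set x := A * Real.sqrt (9 * L / (16 * (A * m))) with hx
  set y := B * Real.sqrt (9 * L / (16 * (B * m))) with hy
  have hx0 : 0 ≤ x := by positivity
  have hy0 : 0 ≤ y := by positivity
  have hxsq : x ^ 2 = 9 * L * A / (16 * m) := by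
    rw [hx, mul_pow, Real.sq_sqrt (by positivity)]
    field_simp
  have hysq : y ^ 2 = 9 * L * B / (16 * m) := by
    rw [hy, mul_pow, Real.sq_sqrt (by positivity)]
    field_simp
  have hLB : 0 ≤ L * B := by positivity
  have hLA : 0 ≤ L * A := by positivity
  refine ⟨?_, ?_, ?_⟩
  · apply sq_le_imp (by positivity) (by positivity)
    have hsum : (x + y) ^ 2 ≤ 2 * (x ^ 2 + y ^ 2) := by nlinarith [sq_nonneg (x - y)]
    have h2 : 2 * (x ^ 2 + y ^ 2) ≤ (ε * D / 4) ^ 2 := by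
      rw [hxsq, hysq]
      have e : 2 * (9 * L * A / (16 * m) + 9 * L * B / (16 * m))
          = 18 * L * (A + B) / (16 * m) := by
        field_simp
        ring
      rw [e, div_pow, div_le_div_iff₀ (by positivity) (by positivity)]
      nlinarith [key, hm]
    linarith
  · apply sq_le_imp hx0 (by positivity)
    have h32 : (4 * Real.sqrt 2) ^ 2 = 32 := by rw [mul_pow, hs2sq]; norm_num
    rw [hxsq, div_pow, h32, div_le_div_iff₀ (by positivity) (by norm_num)]
    nlinarith [key, hm]
  · apply sq_le_imp hy0 (by positivity)
    have h32 : (4 * Real.sqrt 2) ^ 2 = 32 := by rw [mul_pow, hs2sq]; norm_num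
    rw [hysq, div_pow, h32, div_le_div_iff₀ (by positivity) (by norm_num)]
    nlinarith [key, hm]

lemma sqrt_quad_bound {L m ε : ℝ} {a : Fin 4 → ℝ} (hL : 0 < L) (hm : 0 < m)
    (ha : ∀ j, 0 < a j) (hsum : a 0 + a 1 + a 2 + a 3 = 1) (hε : 0 < ε)
    (hbig : 36 * L / ε ^ 2 ≤ m) :
    a 0 * Real.sqrt (9 * L / (16 * (a 0 * m))) + a 1 * Real.sqrt (9 * L / (16 * (a 1 * m)))
      + a 2 * Real.sqrt (9 * L / (16 * (a 2 * m)))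
      + a 3 * Real.sqrt (9 * L / (16 * (a 3 * m))) ≤ ε / 4 := by
  have ha0 := ha 0
  have ha1 := ha 1
  have ha2 := ha 2
  have ha3 := ha 3
  have key : 36 * L ≤ m * ε ^ 2 := by
    exact (div_le_iff₀ (by positivity)).1 hbig
  have hxsq : ∀ j, (a j * Real.sqrt (9 * L / (16 * (a j * m)))) ^ 2
      = 9 * L * a j / (16 * m) := by
    intro j
    have haj := ha j
    rw [mul_pow, Real.sq_sqrt (by positivity)]
    have := (ha j).ne'
    field_simp
  set x0 := a 0 * Real.sqrt (9 * L / (16 * (a 0 * m)))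
  set x1 := a 1 * Real.sqrt (9 * L / (16 * (a 1 * m)))
  set x2 := a 2 * Real.sqrt (9 * L / (16 * (a 2 * m)))
  set x3 := a 3 * Real.sqrt (9 * L / (16 * (a 3 * m)))
  have h0 : 0 ≤ x0 := by positivity
  have h1 : 0 ≤ x1 := by positivity
  have h2 : 0 ≤ x2 := by positivity
  have h3 : 0 ≤ x3 := by positivity
  apply sq_le_imp (by positivity) (by positivity)
  have hq : (x0 + x1 + x2 + x3) ^ 2 ≤ 4 * (x0 ^ 2 + x1 ^ 2 + x2 ^ 2 + x3 ^ 2) := by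
    nlinarith [sq_nonneg (x0 - x1), sq_nonneg (x0 - x2), sq_nonneg (x0 - x3),
      sq_nonneg (x1 - x2), sq_nonneg (x1 - x3), sq_nonneg (x2 - x3)]
  have hsumsq : x0 ^ 2 + x1 ^ 2 + x2 ^ 2 + x3 ^ 2 = 9 * L / (16 * m) := by
    rw [hxsq 0, hxsq 1, hxsq 2, hxsq 3, ← add_div, ← add_div, ← add_div]
    congr 1
    linear_combination 9 * L * hsum
  have : 4 * (9 * L / (16 * m)) ≤ (ε / 4) ^ 2 := by
    have e : 4 * (9 * L / (16 * m)) = 9 * L / (4 * m) := by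
      field_simp
      ring
    rw [e, div_pow, div_le_div_iff₀ (by positivity) (by norm_num)]
    nlinarith [key, hm]
  calc (x0 + x1 + x2 + x3) ^ 2 ≤ 4 * (x0 ^ 2 + x1 ^ 2 + x2 ^ 2 + x3 ^ 2) := hq
    _ = 4 * (9 * L / (16 * m)) := by rw [hsumsq]
    _ ≤ (ε / 4) ^ 2 := this

set_option maxHeartbeats 2000000 in
lemma ate_perturb (a q q' b : Fin 4 → ℝ) (ε : ℝ) (hε : 0 < ε) (hε1 : ε ≤ 1)
    (ha : ∀ j, 0 ≤ a j) (hasum : ∑ j, a j = 1)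
    (hq0 : ∀ j, 0 ≤ q j) (hq1 : ∀ j, q j ≤ 1)
    (hq0' : ∀ j, 0 ≤ q' j) (hq1' : ∀ j, q' j ≤ 1)
    (hb : ∀ j, |a j * q' j - a j * q j| ≤ b j)
    (hD1 : 0 < a 3 * q 3 + a 1 * q 1)
    (hD2 : 0 < a 3 * (1 - q 3) + a 1 * (1 - q 1))
    (hD3 : 0 < a 2 * q 2 + a 0 * q 0)
    (hD4 : 0 < a 2 * (1 - q 2) + a 0 * (1 - q 0))
    (H1 : b 1 + b 3 ≤ ε * (a 3 * q 3 + a 1 * q 1) / 4)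
    (H2 : b 1 + b 3 ≤ ε * (a 3 * (1 - q 3) + a 1 * (1 - q 1)) / 4)
    (H3 : b 0 + b 2 ≤ ε * (a 2 * q 2 + a 0 * q 0) / 4)
    (H4 : b 0 + b 2 ≤ ε * (a 2 * (1 - q 2) + a 0 * (1 - q 0)) / 4)
    (H1a : b 1 ≤ ε * (a 3 * q 3 + a 1 * q 1) / (4 * Real.sqrt 2))
    (H1b : b 3 ≤ ε * (a 3 * q 3 + a 1 * q 1) / (4 * Real.sqrt 2))
    (H2a : b 1 ≤ ε * (a 3 * (1 - q 3) + a 1 * (1 - q 1)) / (4 * Real.sqrt 2))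
    (H2b : b 3 ≤ ε * (a 3 * (1 - q 3) + a 1 * (1 - q 1)) / (4 * Real.sqrt 2))
    (H3a : b 0 ≤ ε * (a 2 * q 2 + a 0 * q 0) / (4 * Real.sqrt 2))
    (H3b : b 2 ≤ ε * (a 2 * q 2 + a 0 * q 0) / (4 * Real.sqrt 2))
    (H4a : b 0 ≤ ε * (a 2 * (1 - q 2) + a 0 * (1 - q 0)) / (4 * Real.sqrt 2))
    (H4b : b 2 ≤ ε * (a 2 * (1 - q 2) + a 0 * (1 - q 0)) / (4 * Real.sqrt 2))
    (H5 : b 0 + b 1 + b 2 + b 3 ≤ ε / 4) :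
    |ATE (pOf a q') - ATE (pOf a q)| < ε := by
  set S : ℝ := a 0 * q 0 + a 1 * q 1 + a 2 * q 2 + a 3 * q 3 with hS
  set S' : ℝ := a 0 * q' 0 + a 1 * q' 1 + a 2 * q' 2 + a 3 * q' 3 with hS'
  set r1 : ℝ := a 3 * q 3 / (a 3 * q 3 + a 1 * q 1) with hr1d
  set r2 : ℝ := a 3 * (1 - q 3) / (a 3 * (1 - q 3) + a 1 * (1 - q 1)) with hr2d
  set r3 : ℝ := a 2 * q 2 / (a 2 * q 2 + a 0 * q 0) with hr3d
  set r4 : ℝ := a 2 * (1 - q 2) / (a 2 * (1 - q 2) + a 0 * (1 - q 0)) with hr4d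
  set r1' : ℝ := a 3 * q' 3 / (a 3 * q' 3 + a 1 * q' 1) with hr1d'
  set r2' : ℝ := a 3 * (1 - q' 3) / (a 3 * (1 - q' 3) + a 1 * (1 - q' 1)) with hr2d'
  set r3' : ℝ := a 2 * q' 2 / (a 2 * q' 2 + a 0 * q' 0) with hr3d'
  set r4' : ℝ := a 2 * (1 - q' 2) / (a 2 * (1 - q' 2) + a 0 * (1 - q' 0)) with hr4d'
  have hATE : ATE (pOf a q) = S * (r1 - r3) + (1 - S) * (r2 - r4) := by
    simp only [ATE,
      show pOf a q 0 = a 0 * q 0 from rfl, show pOf a q 1 = a 0 * (1 - q 0) from rfl,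
      show pOf a q 2 = a 1 * q 1 from rfl, show pOf a q 3 = a 1 * (1 - q 1) from rfl,
      show pOf a q 4 = a 2 * q 2 from rfl, show pOf a q 5 = a 2 * (1 - q 2) from rfl,
      show pOf a q 6 = a 3 * q 3 from rfl, show pOf a q 7 = a 3 * (1 - q 3) from rfl,
      hS, hr1d, hr2d, hr3d, hr4d]
    ring
  have hATE' : ATE (pOf a q') = S' * (r1' - r3') + (1 - S') * (r2' - r4') := by
    simp only [ATE,
      show pOf a q' 0 = a 0 * q' 0 from rfl, show pOf a q' 1 = a 0 * (1 - q' 0) from rfl,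
      show pOf a q' 2 = a 1 * q' 1 from rfl, show pOf a q' 3 = a 1 * (1 - q' 1) from rfl,
      show pOf a q' 4 = a 2 * q' 2 from rfl, show pOf a q' 5 = a 2 * (1 - q' 2) from rfl,
      show pOf a q' 6 = a 3 * q' 3 from rfl, show pOf a q' 7 = a 3 * (1 - q' 3) from rfl,
      hS', hr1d', hr2d', hr3d', hr4d']
    ring
  have hb3' : |a 3 * (1 - q' 3) - a 3 * (1 - q 3)| ≤ b 3 := by
    have he : a 3 * (1 - q' 3) - a 3 * (1 - q 3) = -(a 3 * q' 3 - a 3 * q 3) := by ring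
    rw [he, abs_neg]; exact hb 3
  have hb1' : |a 1 * (1 - q' 1) - a 1 * (1 - q 1)| ≤ b 1 := by
    have he : a 1 * (1 - q' 1) - a 1 * (1 - q 1) = -(a 1 * q' 1 - a 1 * q 1) := by ring
    rw [he, abs_neg]; exact hb 1
  have hb0' : |a 0 * (1 - q' 0) - a 0 * (1 - q 0)| ≤ b 0 := by
    have he : a 0 * (1 - q' 0) - a 0 * (1 - q 0) = -(a 0 * q' 0 - a 0 * q 0) := by ring
    rw [he, abs_neg]; exact hb 0
  have hb2' : |a 2 * (1 - q' 2) - a 2 * (1 - q 2)| ≤ b 2 := by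
    have he : a 2 * (1 - q' 2) - a 2 * (1 - q 2) = -(a 2 * q' 2 - a 2 * q 2) := by ring
    rw [he, abs_neg]; exact hb 2
  have hb0n : 0 ≤ b 0 := (abs_nonneg _).trans (hb 0)
  have hb1n : 0 ≤ b 1 := (abs_nonneg _).trans (hb 1)
  have hb2n : 0 ≤ b 2 := (abs_nonneg _).trans (hb 2)
  have hb3n : 0 ≤ b 3 := (abs_nonneg _).trans (hb 3)
  have hr1b : |r1' - r1| ≤ ε / (3 * Real.sqrt 2) := by
    rw [hr1d', hr1d]
    apply ratio_perturb (mul_nonneg (ha 3) (hq0 3)) (mul_nonneg (ha 1) (hq0 1)) hε hD1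
    · exact (hb 3).trans H1b
    · exact (hb 1).trans H1a
    · have h := add_le_add (hb 3) (hb 1)
      have hp := mul_nonneg (sub_nonneg.2 hε1) hD1.le
      linarith
  have hr2b : |r2' - r2| ≤ ε / (3 * Real.sqrt 2) := by
    rw [hr2d', hr2d]
    apply ratio_perturb (mul_nonneg (ha 3) (by linarith [hq1 3]))
      (mul_nonneg (ha 1) (by linarith [hq1 1])) hε hD2
    · exact hb3'.trans H2b
    · exact hb1'.trans H2a
    · have h := add_le_add hb3' hb1'
      have hp := mul_nonneg (sub_nonneg.2 hε1) hD2.le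
      linarith
  have hr3b : |r3' - r3| ≤ ε / (3 * Real.sqrt 2) := by
    rw [hr3d', hr3d]
    apply ratio_perturb (mul_nonneg (ha 2) (hq0 2)) (mul_nonneg (ha 0) (hq0 0)) hε hD3
    · exact (hb 2).trans H3b
    · exact (hb 0).trans H3a
    · have h := add_le_add (hb 2) (hb 0)
      have hp := mul_nonneg (sub_nonneg.2 hε1) hD3.le
      linarith
  have hr4b : |r4' - r4| ≤ ε / (3 * Real.sqrt 2) := by
    rw [hr4d', hr4d]
    apply ratio_perturb (mul_nonneg (ha 2) (by linarith [hq1 2]))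
      (mul_nonneg (ha 0) (by linarith [hq1 0])) hε hD4
    · exact hb2'.trans H4b
    · exact hb0'.trans H4a
    · have h := add_le_add hb2' hb0'
      have hp := mul_nonneg (sub_nonneg.2 hε1) hD4.le
      linarith
  have hRR : |(r1' - r3') - (r1 - r3)| ≤ 2 * (ε / (3 * Real.sqrt 2)) := by
    have he : (r1' - r3') - (r1 - r3) = (r1' - r1) - (r3' - r3) := by ring
    rw [he]
    have := abs_sub (r1' - r1) (r3' - r3)
    linarith
  have hQQ : |(r2' - r4') - (r2 - r4)| ≤ 2 * (ε / (3 * Real.sqrt 2)) := by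
    have he : (r2' - r4') - (r2 - r4) = (r2' - r2) - (r4' - r4) := by ring
    rw [he]
    have := abs_sub (r2' - r2) (r4' - r4)
    linarith
  have hSb : |S' - S| ≤ ε / 4 := by
    have he : S' - S = (a 0 * q' 0 - a 0 * q 0) + (a 1 * q' 1 - a 1 * q 1)
        + (a 2 * q' 2 - a 2 * q 2) + (a 3 * q' 3 - a 3 * q 3) := by
      rw [hS, hS']; ring
    rw [he]
    have h1 := abs_add_le ((a 0 * q' 0 - a 0 * q 0) + (a 1 * q' 1 - a 1 * q 1)
        + (a 2 * q' 2 - a 2 * q 2)) (a 3 * q' 3 - a 3 * q 3)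
    have h2 := abs_add_le ((a 0 * q' 0 - a 0 * q 0) + (a 1 * q' 1 - a 1 * q 1))
        (a 2 * q' 2 - a 2 * q 2)
    have h3 := abs_add_le (a 0 * q' 0 - a 0 * q 0) (a 1 * q' 1 - a 1 * q 1)
    linarith [hb 0, hb 1, hb 2, hb 3]
  rw [Fin.sum_univ_four] at hasum
  have hS'0 : 0 ≤ S' := by
    rw [hS']
    have := mul_nonneg (ha 0) (hq0' 0)
    have := mul_nonneg (ha 1) (hq0' 1)
    have := mul_nonneg (ha 2) (hq0' 2)
    have := mul_nonneg (ha 3) (hq0' 3)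
    linarith
  have hS'1 : S' ≤ 1 := by
    rw [hS']
    have h0 := mul_le_of_le_one_right (ha 0) (hq1' 0)
    have h1 := mul_le_of_le_one_right (ha 1) (hq1' 1)
    have h2 := mul_le_of_le_one_right (ha 2) (hq1' 2)
    have h3 := mul_le_of_le_one_right (ha 3) (hq1' 3)
    linarith
  have hrange : ∀ u v : ℝ, 0 ≤ u → 0 ≤ v → 0 < u + v → 0 ≤ u / (u + v) ∧ u / (u + v) ≤ 1 := by
    intro u v hu hv hD
    constructor
    · positivity
    · rw [div_le_one hD]; linarith
  have hRQ : |(r1 - r3) - (r2 - r4)| ≤ 2 := by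
    obtain ⟨a1, a2⟩ := hrange _ _ (mul_nonneg (ha 3) (hq0 3)) (mul_nonneg (ha 1) (hq0 1)) hD1
    obtain ⟨c1, c2⟩ := hrange _ _ (mul_nonneg (ha 3) (by linarith [hq1 3]))
      (mul_nonneg (ha 1) (by linarith [hq1 1])) hD2
    obtain ⟨d1, d2⟩ := hrange _ _ (mul_nonneg (ha 2) (hq0 2)) (mul_nonneg (ha 0) (hq0 0)) hD3
    obtain ⟨e1, e2⟩ := hrange _ _ (mul_nonneg (ha 2) (by linarith [hq1 2]))
      (mul_nonneg (ha 0) (by linarith [hq1 0])) hD4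
    rw [abs_le]
    constructor <;> [skip; skip] <;>
      simp only [hr1d, hr2d, hr3d, hr4d] <;> linarith
  rw [hATE, hATE']
  exact combine_perturb hS'0 hS'1 hRQ hRR hQQ hSb hε

set_option maxHeartbeats 1000000 in
/-- Sample complexity for estimating the ATE with infinite observational data,
sampling the experimental data according to the distribution,
i.e. `(x_1,x_2,x_3,x_4) = (a_1,a_2,a_3,a_4)` (Theorem 2, first bullet). -/
theorem ate_sample_complexity_sampling_from_distribution
    {Ω : Type*} [MeasurableSpace Ω] (μ : Measure Ω) [IsProbabilityMeasure μ]
    (a q : Fin 4 → ℝ) (ha : ∀ j, 0 ≤ a j) (hasum : ∑ j, a j = 1)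
    (hq0 : ∀ j, 0 ≤ q j) (hq1 : ∀ j, q j ≤ 1)
    (m : ℕ) (n : Fin 4 → ℕ) (hn : ∀ j, 0 < n j)
    -- allocation according to the distribution: `n j = x j * m` with `x j = a j`
    (halloc : ∀ j, (n j : ℝ) = a j * m)
    (W : (j : Fin 4) → Fin (n j) → Ω → Bool)
    (hWmeas : ∀ j i, Measurable (W j i))
    (hindep : iIndepFun
      (fun k : Σ j : Fin 4, Fin (n j) => W k.1 k.2) μ)
    (hdist : ∀ j i, μ {ω | W j i ω = true} = ENNReal.ofReal (q j))
    (ε δ : ℝ) (hε0 : 0 < ε) (hε1 : ε ≤ 1) (hδ0 : 0 < δ) (hδ1 : δ < 1)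
    (h37 : 0 < pOf a q 2 + pOf a q 6) (h48 : 0 < pOf a q 3 + pOf a q 7)
    (h15 : 0 < pOf a q 0 + pOf a q 4) (h26 : 0 < pOf a q 1 + pOf a q 5)
    (hm : (m : ℝ) ≥ 18 * Real.log (8 / δ) / ε ^ 2 *
      max ((a 1 + a 3) /
            min ((pOf a q 2 + pOf a q 6) ^ 2) ((pOf a q 3 + pOf a q 7) ^ 2))
          ((a 0 + a 2) /
            min ((pOf a q 0 + pOf a q 4) ^ 2) ((pOf a q 1 + pOf a q 5) ^ 2))) :
    μ {ω | ε ≤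
        |ATE (pOf a (fun j =>
            ((Finset.univ.filter fun i => W j i ω = true).card : ℝ) / n j)) -
          ATE (pOf a q)|}
      < ENNReal.ofReal δ := by
  classical
  set L := Real.log (8 / δ) with hLdef
  have hL : 0 < L := Real.log_pos (by rw [lt_div_iff₀ hδ0]; linarith)
  have hm0 : 0 < m := by
    rcases Nat.eq_zero_or_pos m with h | h
    · exfalso
      have h0 := halloc 0
      rw [h] at h0
      push_cast at h0
      have := hn 0
      have h0' : (n 0 : ℝ) = 0 := by rw [h0]; ring
      have : (0:ℝ) < (n 0 : ℝ) := Nat.cast_pos.2 this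
      linarith
    · exact h
  have hmR : (0:ℝ) < (m:ℕ) := Nat.cast_pos.2 hm0
  have hnR : ∀ j, (0:ℝ) < (n j : ℝ) := fun j => Nat.cast_pos.2 (hn j)
  have hapos : ∀ j, 0 < a j := by
    intro j
    by_contra hc
    push_neg at hc
    have h1 : a j * (m:ℝ) ≤ 0 := mul_nonpos_of_nonpos_of_nonneg hc hmR.le
    have := halloc j
    linarith [hnR j]
  -- rewrite pOf sums
  rw [show pOf a q 2 + pOf a q 6 = a 1 * q 1 + a 3 * q 3 from rfl,
    show pOf a q 3 + pOf a q 7 = a 1 * (1 - q 1) + a 3 * (1 - q 3) from rfl,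
    show pOf a q 0 + pOf a q 4 = a 0 * q 0 + a 2 * q 2 from rfl,
    show pOf a q 1 + pOf a q 5 = a 0 * (1 - q 0) + a 2 * (1 - q 2) from rfl] at hm
  rw [show pOf a q 2 + pOf a q 6 = a 1 * q 1 + a 3 * q 3 from rfl] at h37
  rw [show pOf a q 3 + pOf a q 7 = a 1 * (1 - q 1) + a 3 * (1 - q 3) from rfl] at h48
  rw [show pOf a q 0 + pOf a q 4 = a 0 * q 0 + a 2 * q 2 from rfl] at h15
  rw [show pOf a q 1 + pOf a q 5 = a 0 * (1 - q 0) + a 2 * (1 - q 2) from rfl] at h26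
  have hcoef : (0:ℝ) ≤ 18 * L / ε ^ 2 := by positivity
  have hM1 : 18 * L / ε ^ 2 * ((a 1 + a 3) /
      min ((a 1 * q 1 + a 3 * q 3) ^ 2) ((a 1 * (1 - q 1) + a 3 * (1 - q 3)) ^ 2)) ≤ m :=
    le_trans (mul_le_mul_of_nonneg_left (le_max_left _ _) hcoef) hm
  have hM2 : 18 * L / ε ^ 2 * ((a 0 + a 2) /
      min ((a 0 * q 0 + a 2 * q 2) ^ 2) ((a 0 * (1 - q 0) + a 2 * (1 - q 2)) ^ 2)) ≤ m :=
    le_trans (mul_le_mul_of_nonneg_left (le_max_right _ _) hcoef) hm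
  have hs13 : 0 < a 1 + a 3 := by linarith [hapos 1, hapos 3]
  have hs02 : 0 < a 0 + a 2 := by linarith [hapos 0, hapos 2]
  have hmin13 : 0 < min ((a 1 * q 1 + a 3 * q 3) ^ 2) ((a 1 * (1 - q 1) + a 3 * (1 - q 3)) ^ 2) :=
    lt_min (pow_pos h37 2) (pow_pos h48 2)
  have hmin02 : 0 < min ((a 0 * q 0 + a 2 * q 2) ^ 2) ((a 0 * (1 - q 0) + a 2 * (1 - q 2)) ^ 2) :=
    lt_min (pow_pos h15 2) (pow_pos h26 2)
  -- per-denominator big-m bounds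
  have hbigD1 : 18 * L / ε ^ 2 * ((a 1 + a 3) / (a 3 * q 3 + a 1 * q 1) ^ 2) ≤ m := by
    refine le_trans (mul_le_mul_of_nonneg_left ?_ hcoef) hM1
    rw [show (a 3 * q 3 + a 1 * q 1) ^ 2 = (a 1 * q 1 + a 3 * q 3) ^ 2 from by ring]
    exact div_le_div_of_nonneg_left hs13.le hmin13 (min_le_left _ _)
  have hbigD2 : 18 * L / ε ^ 2 * ((a 1 + a 3) / (a 3 * (1 - q 3) + a 1 * (1 - q 1)) ^ 2) ≤ m := by
    refine le_trans (mul_le_mul_of_nonneg_left ?_ hcoef) hM1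
    rw [show (a 3 * (1 - q 3) + a 1 * (1 - q 1)) ^ 2
      = (a 1 * (1 - q 1) + a 3 * (1 - q 3)) ^ 2 from by ring]
    exact div_le_div_of_nonneg_left hs13.le hmin13 (min_le_right _ _)
  have hbigD3 : 18 * L / ε ^ 2 * ((a 0 + a 2) / (a 2 * q 2 + a 0 * q 0) ^ 2) ≤ m := by
    refine le_trans (mul_le_mul_of_nonneg_left ?_ hcoef) hM2
    rw [show (a 2 * q 2 + a 0 * q 0) ^ 2 = (a 0 * q 0 + a 2 * q 2) ^ 2 from by ring]
    exact div_le_div_of_nonneg_left hs02.le hmin02 (min_le_left _ _)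
  have hbigD4 : 18 * L / ε ^ 2 * ((a 0 + a 2) / (a 2 * (1 - q 2) + a 0 * (1 - q 0)) ^ 2) ≤ m := by
    refine le_trans (mul_le_mul_of_nonneg_left ?_ hcoef) hM2
    rw [show (a 2 * (1 - q 2) + a 0 * (1 - q 0)) ^ 2
      = (a 0 * (1 - q 0) + a 2 * (1 - q 2)) ^ 2 from by ring]
    exact div_le_div_of_nonneg_left hs02.le hmin02 (min_le_right _ _)
  have hasum4 : a 0 + a 1 + a 2 + a 3 = 1 := by rw [Fin.sum_univ_four] at hasum; exact hasum
  -- 36 L / ε² ≤ m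
  have h36 : 36 * L / ε ^ 2 ≤ m := by
    have key : ∀ s D : ℝ, 0 < s → 0 < D → D ≤ s → s ≤ 1 / 2 →
        18 * L / ε ^ 2 * (s / D ^ 2) ≤ (m:ℝ) → 36 * L / ε ^ 2 ≤ m := by
      intro s D hs hD hDs hhalf hle
      have h2 : (2:ℝ) ≤ s / D ^ 2 := by
        have hD2 : D ^ 2 ≤ s ^ 2 := by nlinarith
        have : s / s ^ 2 ≤ s / D ^ 2 :=
          div_le_div_of_nonneg_left hs.le (by positivity) hD2
        have he : s / s ^ 2 = 1 / s := by
          field_simp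
        rw [he] at this
        refine le_trans ?_ this
        rw [le_div_iff₀ hs]
        linarith
      calc 36 * L / ε ^ 2 = 18 * L / ε ^ 2 * 2 := by ring
        _ ≤ 18 * L / ε ^ 2 * (s / D ^ 2) := mul_le_mul_of_nonneg_left h2 hcoef
        _ ≤ m := hle
    rcases le_total (a 1 + a 3) (1 / 2) with hc | hc
    · exact key (a 1 + a 3) (a 3 * q 3 + a 1 * q 1) hs13 (by linarith)
        (by nlinarith [mul_le_of_le_one_right (ha 1) (hq1 1),
          mul_le_of_le_one_right (ha 3) (hq1 3)]) hc hbigD1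
    · exact key (a 0 + a 2) (a 2 * q 2 + a 0 * q 0) hs02 (by linarith)
        (by nlinarith [mul_le_of_le_one_right (ha 0) (hq1 0),
          mul_le_of_le_one_right (ha 2) (hq1 2)]) (by linarith) hbigD3
  -- the threshold function
  set t : Fin 4 → ℝ := fun j => Real.sqrt (9 * L / (16 * (n j : ℝ))) with htdef
  have htpos : ∀ j, 0 < t j := fun j =>
    Real.sqrt_pos.2 (div_pos (by linarith) (by linarith [hnR j]))
  have htn : ∀ j, t j = Real.sqrt (9 * L / (16 * (a j * m))) := fun j => by
    rw [htdef]
    simp only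
    rw [halloc j]
  -- numeric bounds
  obtain ⟨P1, P1a, P1b⟩ := sqrt_pair_bound hL hmR (hapos 1) (hapos 3) (show (0:ℝ) <
    a 3 * q 3 + a 1 * q 1 from by linarith) hε0 hbigD1
  obtain ⟨P2, P2a, P2b⟩ := sqrt_pair_bound hL hmR (hapos 1) (hapos 3) (show (0:ℝ) <
    a 3 * (1 - q 3) + a 1 * (1 - q 1) from by linarith) hε0 hbigD2
  obtain ⟨P3, P3a, P3b⟩ := sqrt_pair_bound hL hmR (hapos 0) (hapos 2) (show (0:ℝ) <
    a 2 * q 2 + a 0 * q 0 from by linarith) hε0 hbigD3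
  obtain ⟨P4, P4a, P4b⟩ := sqrt_pair_bound hL hmR (hapos 0) (hapos 2) (show (0:ℝ) <
    a 2 * (1 - q 2) + a 0 * (1 - q 0) from by linarith) hε0 hbigD4
  have P5 := sqrt_quad_bound hL hmR hapos hasum4 hε0 h36
  -- the bad events
  set E : Fin 4 → Set Ω := fun j => {ω | t j ≤
    |((Finset.univ.filter fun i => W j i ω = true).card : ℝ) / (n j : ℝ) - q j|} with hEdef
  have hsubset : {ω | ε ≤
      |ATE (pOf a (fun j =>
          ((Finset.univ.filter fun i => W j i ω = true).card : ℝ) / n j)) -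
        ATE (pOf a q)|} ⊆ ⋃ j, E j := by
    intro ω hω
    by_contra hno
    simp only [Set.mem_iUnion, not_exists, hEdef, Set.mem_setOf_eq, not_le] at hno
    simp only [Set.mem_setOf_eq] at hω
    set q' : Fin 4 → ℝ := fun j =>
      ((Finset.univ.filter fun i => W j i ω = true).card : ℝ) / (n j : ℝ) with hq'def
    have hq0' : ∀ j, 0 ≤ q' j := fun j => by positivity
    have hq1' : ∀ j, q' j ≤ 1 := by
      intro j
      rw [hq'def]
      simp only
      rw [div_le_one (hnR j)]
      have hcard : (Finset.univ.filter fun i => W j i ω = true).card ≤ n j := by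
        calc (Finset.univ.filter fun i => W j i ω = true).card
            ≤ (Finset.univ : Finset (Fin (n j))).card := Finset.card_filter_le _ _
          _ = n j := by simp
      exact_mod_cast hcard
    have hb : ∀ j, |a j * q' j - a j * q j| ≤ a j * t j := by
      intro j
      rw [show a j * q' j - a j * q j = a j * (q' j - q j) from by ring, abs_mul,
        abs_of_nonneg (ha j)]
      exact mul_le_mul_of_nonneg_left (hno j).le (ha j)
    have hdet := ate_perturb a q q' (fun j => a j * t j) ε hε0 hε1 ha hasum hq0 hq1 hq0' hq1' hb
      (by linarith) (by linarith) (by linarith) (by linarith)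
      (by simp only [htn]; exact P1) (by simp only [htn]; exact P2)
      (by simp only [htn]; exact P3) (by simp only [htn]; exact P4)
      (by simp only [htn]; exact P1a) (by simp only [htn]; exact P1b)
      (by simp only [htn]; exact P2a) (by simp only [htn]; exact P2b)
      (by simp only [htn]; exact P3a) (by simp only [htn]; exact P3b)
      (by simp only [htn]; exact P4a) (by simp only [htn]; exact P4b)
      (by simp only [htn]; exact P5)
    exact absurd hω (not_le.2 hdet)
  have hE : ∀ j, μ (E j) ≤ ENNReal.ofReal (2 * Real.exp (-(9 / 8) * L)) := by
    intro j
    have hinj : Function.Injective (fun i : Fin (n j) => (⟨j, i⟩ : Σ j : Fin 4, Fin (n j))) :=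
      fun i i' h => eq_of_heq (Sigma.mk.inj_iff.1 h).2
    have hind_j : iIndepFun (fun i => W j i) μ :=
      iIndepFun_precomp (fun i : Fin (n j) => (⟨j, i⟩ : Σ j : Fin 4, Fin (n j))) hinj hindep
    have hst := stratum_tail μ (hn j) (W j) (hWmeas j) hind_j (hq0 j) (hq1 j) (hdist j) (htpos j)
    have he : -2 * ((n j : ℝ)) * (t j) ^ 2 = -(9 / 8) * L := by
      rw [htdef]
      simp only
      rw [Real.sq_sqrt (by positivity)]
      field_simp [(hnR j).ne']
      ring
    rw [he] at hst
    exact hst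
  calc μ {ω | ε ≤
        |ATE (pOf a (fun j =>
            ((Finset.univ.filter fun i => W j i ω = true).card : ℝ) / n j)) -
          ATE (pOf a q)|}
      ≤ μ (⋃ j, E j) := measure_mono hsubset
    _ ≤ ∑' j, μ (E j) := measure_iUnion_le _
    _ ≤ ∑' _j : Fin 4, ENNReal.ofReal (2 * Real.exp (-(9 / 8) * L)) := ENNReal.tsum_le_tsum hE
    _ = 4 * ENNReal.ofReal (2 * Real.exp (-(9 / 8) * L)) := by
        rw [tsum_fintype]
        simp [Finset.sum_const, mul_comm]
    _ = ENNReal.ofReal (8 * Real.exp (-(9 / 8) * L)) := by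
        rw [show (4 : ENNReal) = ENNReal.ofReal (4:ℝ) from by simp,
          ← ENNReal.ofReal_mul (by norm_num)]
        congr 1
        ring
    _ < ENNReal.ofReal δ := by
        rw [ENNReal.ofReal_lt_ofReal_iff hδ0]
        have h8 : Real.exp (-L) = δ / 8 := by
          rw [hLdef, Real.exp_neg, Real.exp_log (by positivity)]
          rw [inv_div]
        have hsplit : Real.exp (-(9 / 8) * L) = Real.exp (-L) * Real.exp (-(1 / 8) * L) := by
          rw [← Real.exp_add]
          congr 1
          ring
        have hlt : Real.exp (-(1 / 8) * L) < 1 := by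
          rw [Real.exp_lt_one_iff]
          nlinarith
        calc 8 * Real.exp (-(9 / 8) * L) = δ * Real.exp (-(1 / 8) * L) := by
              rw [hsplit, h8]; ring
          _ < δ * 1 := mul_lt_mul_of_pos_left hlt hδ0
          _ = δ := mul_one δ
end
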